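/- arXiv:2409.16134 — 3 statements merged into one kernel-verified Lean document; each statement's English description precedes it below -/
import Mathlib

section
/- Let W : [-1,1] → [0,∞) satisfy (H1) and (H2). Then there exist constants C ≥ c > 0 (depending only on W) such that for all parameters Λ, κ, σ, b > 0 with Λ² ≥ C·max{bσ, bκ, (bσκ)^{1/2}, b^{1/2}κ}, the infimum of the energy F over the admissible class A satisfies −Λ²/(2κ) ≤ inf_A F ≤ −c·Λ²/κ. -/
open MeasureTheory Set Filter

noncomputable section

/-- The energy functional
`F(u,h) = ∫₀¹ ( W(u) + (b/2)|u'|² + (σ/2)|h'|² + (κ/2)|h''|² + Λ·u·h'' ) dx`,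
expressed in terms of the (weak) derivatives `u'`, `h'`, `h''`. -/
def energyF (W : ℝ → ℝ) (b σ κ Λ : ℝ) (u u' h' h'' : ℝ → ℝ) : ℝ :=
  ∫ x in Ioo (0:ℝ) 1,
    (W (u x) + b / 2 * u' x ^ 2 + σ / 2 * h' x ^ 2 + κ / 2 * h'' x ^ 2 + Λ * u x * h'' x)

/-- The admissible class `A`: `u` is (the restriction of) a `1`-periodic `W^{1,2}_loc`
function with values in `[-1,1]` and mean zero on `(0,1)`, with weak derivative `u'`;
`h` is a `1`-periodic `W^{2,2}_loc` function with mean zero, with weak derivatives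
`h'`, `h''`.  One-dimensional Sobolev regularity is encoded through absolute
continuity (the fundamental theorem of calculus) together with square-integrability
of the highest derivative on the periodicity cell. -/
structure IsAdmissible (u u' h h' h'' : ℝ → ℝ) : Prop where
  u_per : Function.Periodic u 1
  u'_per : Function.Periodic u' 1
  u_ftc : ∀ x : ℝ, u x = u 0 + ∫ t in (0:ℝ)..x, u' t
  u_mem : ∀ x : ℝ, u x ∈ Icc (-1:ℝ) 1
  u'_l2 : MemLp u' 2 (volume.restrict (Ioo (0:ℝ) 1))
  u_mean : (∫ x in Ioo (0:ℝ) 1, u x) = 0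
  h_per : Function.Periodic h 1
  h'_per : Function.Periodic h' 1
  h''_per : Function.Periodic h'' 1
  h_ftc : ∀ x : ℝ, h x = h 0 + ∫ t in (0:ℝ)..x, h' t
  h'_ftc : ∀ x : ℝ, h' x = h' 0 + ∫ t in (0:ℝ)..x, h'' t
  h''_l2 : MemLp h'' 2 (volume.restrict (Ioo (0:ℝ) 1))
  h_mean : (∫ x in Ioo (0:ℝ) 1, h x) = 0

/-- `max{bσ, bκ, (bσκ)^{1/2}, b^{1/2}κ}`. -/
def maxParam (b σ κ : ℝ) : ℝ :=
  max (max (b * σ) (b * κ)) (max (Real.sqrt (b * σ * κ)) (Real.sqrt b * κ))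

open intervalIntegral Real
open scoped Topology

def clamp (t : ℝ) : ℝ := max (-1) (min 1 t)

lemma clamp_mem (t : ℝ) : clamp t ∈ Icc (-1:ℝ) 1 := by
  constructor
  · exact le_max_left _ _
  · simp only [clamp, max_le_iff]
    exact ⟨by norm_num, min_le_left _ _⟩
lemma clamp_neg (t : ℝ) : clamp (-t) = - clamp t := by
  simp only [clamp, min_def, max_def]; split_ifs <;> linarith
lemma clamp_of_one_le {t : ℝ} (h : 1 ≤ t) : clamp t = 1 := by
  rw [clamp, min_eq_left h]; norm_num
lemma clamp_of_le_neg_one {t : ℝ} (h : t ≤ -1) : clamp t = -1 := by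
  rw [clamp, min_eq_right (by linarith), max_eq_left h]
lemma clamp_of_mem {t : ℝ} (h1 : -1 ≤ t) (h2 : t ≤ 1) : clamp t = t := by
  rw [clamp, min_eq_right h2, max_eq_right h1]
lemma continuous_clamp : Continuous clamp :=
  continuous_const.max (continuous_const.min continuous_id)

/-- the scaled-cosine profile -/
def prof (K y : ℝ) : ℝ := clamp (K * Real.cos (2 * π * y))

def profCond (K y : ℝ) : Prop :=
  |K * Real.cos (2 * π * y)| < 1 ∨
  (K * Real.cos (2 * π * y) = 1 ∧ 0 < Real.sin (2 * π * y)) ∨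
  (K * Real.cos (2 * π * y) = -1 ∧ Real.sin (2 * π * y) < 0)

open scoped Classical in
/-- the (right-)derivative of the profile -/
def profD (K y : ℝ) : ℝ := if profCond K y then -(2 * π * K * Real.sin (2 * π * y)) else 0

lemma cos_per (y : ℝ) : Real.cos (2 * π * (y + 1)) = Real.cos (2 * π * y) := by
  rw [show 2 * π * (y + 1) = 2 * π * y + 2 * π by ring, Real.cos_add_two_pi]
lemma sin_per (y : ℝ) : Real.sin (2 * π * (y + 1)) = Real.sin (2 * π * y) := by
  rw [show 2 * π * (y + 1) = 2 * π * y + 2 * π by ring, Real.sin_add_two_pi]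

lemma prof_per (K : ℝ) : Function.Periodic (prof K) 1 := fun y => by
  simp [prof, cos_per]
lemma profD_per (K : ℝ) : Function.Periodic (profD K) 1 := fun y => by
  simp [profD, profCond, cos_per, sin_per]
lemma prof_cont (K : ℝ) : Continuous (prof K) := by
  exact continuous_clamp.comp (by fun_prop)
lemma prof_mem (K y : ℝ) : prof K y ∈ Icc (-1:ℝ) 1 := clamp_mem _
lemma prof_even (K y : ℝ) : prof K (-y) = prof K y := by
  simp [prof, show 2 * π * -y = -(2*π*y) by ring, Real.cos_neg]
lemma prof_anti (K y : ℝ) : prof K (y + 1/2) = - prof K y := by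
  rw [prof, show 2 * π * (y + 1/2) = 2 * π * y + π by ring, Real.cos_add_pi, prof,
    show K * -Real.cos (2*π*y) = -(K * Real.cos (2*π*y)) by ring, clamp_neg]

lemma prof_zero {K : ℝ} (hK : 16 ≤ K) : prof K 0 = 1 := by
  simp only [prof, mul_zero, Real.cos_zero, mul_one]
  exact clamp_of_one_le (by linarith)
lemma prof_half {K : ℝ} (hK : 16 ≤ K) : prof K (1/2) = -1 := by
  rw [show (1/2 : ℝ) = 0 + 1/2 by ring, prof_anti, prof_zero hK]
lemma prof_one {K : ℝ} (hK : 16 ≤ K) : prof K 1 = 1 := by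
  have h := prof_per K 0
  rw [zero_add] at h
  rw [h, prof_zero hK]

lemma profD_bound {K : ℝ} (hK : 16 ≤ K) (y : ℝ) : |profD K y| ≤ 2 * π * K := by
  rw [profD]
  split_ifs
  · rw [abs_neg, abs_mul]
    calc |2 * π * K| * |Real.sin (2*π*y)| ≤ |2 * π * K| * 1 :=
        mul_le_mul_of_nonneg_left (Real.abs_sin_le_one _) (abs_nonneg _)
      _ = 2 * π * K := by rw [mul_one, abs_of_nonneg (by positivity)]
  · simp [abs_nonneg]; positivity

lemma eventually_lt_right {f : ℝ → ℝ} {x d : ℝ} (hf : HasDerivAt f d x) (hd : d < 0) :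
    ∀ᶠ y in 𝓝[>] x, f y < f x := by
  have h := hasDerivAt_iff_tendsto_slope.1 hf
  have h2 : ∀ᶠ y in 𝓝[≠] x, slope f x y < 0 := h.eventually_lt_const hd
  have h3 : ∀ᶠ y in 𝓝[>] x, slope f x y < 0 :=
    h2.filter_mono (nhdsWithin_mono x (fun y hy => by simp [ne_of_gt (mem_Ioi.1 hy)]))
  filter_upwards [h3, self_mem_nhdsWithin] with y hs hy
  have hyx : (0:ℝ) < y - x := sub_pos.2 hy
  rw [slope_def_field] at hs
  have h5 := mul_neg_of_neg_of_pos hs hyx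
  rw [div_mul_cancel₀ _ (ne_of_gt hyx)] at h5
  linarith

lemma eventually_gt_right {f : ℝ → ℝ} {x d : ℝ} (hf : HasDerivAt f d x) (hd : 0 < d) :
    ∀ᶠ y in 𝓝[>] x, f x < f y := by
  have h := eventually_lt_right hf.neg (by linarith : -d < 0)
  filter_upwards [h] with y hy
  simpa using hy

lemma sin_ne_zero_of_eq {K y : ℝ} (hK : 16 ≤ K)
    (h : K * Real.cos (2*π*y) = 1 ∨ K * Real.cos (2*π*y) = -1) :
    Real.sin (2*π*y) ≠ 0 := by
  intro hs
  have hc := Real.sin_sq_add_cos_sq (2*π*y)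
  rw [hs] at hc
  have hc2 : Real.cos (2*π*y) ^ 2 = 1 := by nlinarith
  have h3 : (K * Real.cos (2*π*y))^2 = 1 := by rcases h with h | h <;> rw [h] <;> norm_num
  have h4 : K^2 * (Real.cos (2*π*y)^2) = K^2 := by rw [hc2]; ring
  nlinarith [h3, h4, hK]

lemma hasDerivAt_g (K y : ℝ) :
    HasDerivAt (fun z => K * Real.cos (2*π*z)) (-(2*π*K*Real.sin (2*π*y))) y := by
  have h1 : HasDerivAt (fun z : ℝ => 2*π*z) (2*π) y := by
    simpa using (hasDerivAt_id y).const_mul (2*π)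
  have h2 := (Real.hasDerivAt_cos (2*π*y)).comp y h1
  have h3 := h2.const_mul K
  exact h3.congr_deriv (by ring)

lemma prof_hasDerivWithinAt {K : ℝ} (hK : 16 ≤ K) (y : ℝ) :
    HasDerivWithinAt (prof K) (profD K y) (Ioi y) y := by
  have hgy := hasDerivAt_g K y
  have hgc : ContinuousAt (fun z => K * Real.cos (2*π*z)) y := hgy.continuousAt
  rcases lt_trichotomy (K * Real.cos (2*π*y)) 1 with h1 | h1 | h1
  · rcases lt_trichotomy (K * Real.cos (2*π*y)) (-1) with h2 | h2 | h2
    · -- strictly below -1 : locally constant -1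
      have hev : prof K =ᶠ[𝓝 y] (fun _ => (-1:ℝ)) := by
        filter_upwards [hgc.eventually_lt continuousAt_const h2] with z hz
        exact clamp_of_le_neg_one (le_of_lt hz)
      have hcond : ¬ profCond K y := by
        rintro (hc | ⟨hc, _⟩ | ⟨hc, _⟩)
        · rw [abs_lt] at hc; linarith [hc.1]
        · linarith
        · linarith
      rw [profD, if_neg hcond]
      exact ((hasDerivAt_const y (-1:ℝ)).congr_of_eventuallyEq hev).hasDerivWithinAt
    · -- at the bottom boundary
      have hsin := sin_ne_zero_of_eq hK (Or.inr h2)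
      have hproy : prof K y = -1 := clamp_of_le_neg_one (le_of_eq h2)
      rcases hsin.lt_or_gt with hs | hs
      · -- sin < 0 : derivative of g positive, to the right g ∈ (-1, 1): prof = g
        have hcond : profCond K y := Or.inr (Or.inr ⟨h2, hs⟩)
        rw [profD, if_pos hcond]
        have hup : ∀ᶠ z in 𝓝[>] y, -1 < K * Real.cos (2*π*z) := by
          have := eventually_gt_right hgy (by nlinarith [mul_pos (mul_pos Real.two_pi_pos (show (0:ℝ) < K by linarith)) (neg_pos.2 hs)])
          filter_upwards [this] with z hz; linarith
        have hlt : ∀ᶠ z in 𝓝[>] y, K * Real.cos (2*π*z) < 1 :=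
          (hgc.eventually_lt continuousAt_const (by linarith)).filter_mono nhdsWithin_le_nhds
        have hev : prof K =ᶠ[𝓝[>] y] (fun z => K * Real.cos (2*π*z)) := by
          filter_upwards [hup, hlt] with z ha hb
          exact clamp_of_mem (le_of_lt ha) (le_of_lt hb)
        exact (hgy.hasDerivWithinAt).congr_of_eventuallyEq hev (by rw [hproy, h2])
      · -- sin > 0 : derivative negative, to the right g < -1 : prof = -1
        have hcond : ¬ profCond K y := by
          rintro (hc | ⟨hc, _⟩ | ⟨_, hc⟩)
          · rw [abs_lt] at hc; linarith [hc.1]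
          · linarith
          · linarith
        rw [profD, if_neg hcond]
        have hdown : ∀ᶠ z in 𝓝[>] y, K * Real.cos (2*π*z) < -1 := by
          have := eventually_lt_right hgy (by nlinarith [mul_pos (mul_pos Real.two_pi_pos (show (0:ℝ) < K by linarith)) hs])
          filter_upwards [this] with z hz; linarith
        have hev : prof K =ᶠ[𝓝[>] y] (fun _ => (-1:ℝ)) := by
          filter_upwards [hdown] with z hz
          exact clamp_of_le_neg_one (le_of_lt hz)
        exact (hasDerivWithinAt_const y _ (-1:ℝ)).congr_of_eventuallyEq hev (by rw [hproy])
    · -- interior : prof = g locally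
      have hcond : profCond K y := Or.inl (abs_lt.2 ⟨h2, h1⟩)
      rw [profD, if_pos hcond]
      have hev : prof K =ᶠ[𝓝 y] (fun z => K * Real.cos (2*π*z)) := by
        filter_upwards [hgc.eventually_lt continuousAt_const h1,
          ContinuousAt.eventually_lt continuousAt_const hgc h2] with z ha hb
        exact clamp_of_mem (le_of_lt hb) (le_of_lt ha)
      exact (hgy.congr_of_eventuallyEq hev).hasDerivWithinAt
  · -- at the top boundary
    have hsin := sin_ne_zero_of_eq hK (Or.inl h1)
    have hproy : prof K y = 1 := clamp_of_one_le (le_of_eq h1.symm)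
    rcases hsin.lt_or_gt with hs | hs
    · -- sin < 0 : derivative of g positive : right g > 1 : prof = 1
      have hcond : ¬ profCond K y := by
        rintro (hc | ⟨_, hc⟩ | ⟨hc, _⟩)
        · rw [abs_lt] at hc; linarith [hc.2]
        · linarith
        · linarith
      rw [profD, if_neg hcond]
      have hup : ∀ᶠ z in 𝓝[>] y, 1 < K * Real.cos (2*π*z) := by
        have := eventually_gt_right hgy (by nlinarith [mul_pos (mul_pos Real.two_pi_pos (show (0:ℝ) < K by linarith)) (neg_pos.2 hs)])
        filter_upwards [this] with z hz; linarith
      have hev : prof K =ᶠ[𝓝[>] y] (fun _ => (1:ℝ)) := by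
        filter_upwards [hup] with z hz
        exact clamp_of_one_le (le_of_lt hz)
      exact (hasDerivWithinAt_const y _ (1:ℝ)).congr_of_eventuallyEq hev (by rw [hproy])
    · -- sin > 0 : derivative negative : right g ∈ (-1,1) : prof = g
      have hcond : profCond K y := Or.inr (Or.inl ⟨h1, hs⟩)
      rw [profD, if_pos hcond]
      have hlt : ∀ᶠ z in 𝓝[>] y, K * Real.cos (2*π*z) < 1 := by
        have := eventually_lt_right hgy (by nlinarith [mul_pos (mul_pos Real.two_pi_pos (show (0:ℝ) < K by linarith)) hs])
        filter_upwards [this] with z hz; linarith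
      have hup : ∀ᶠ z in 𝓝[>] y, -1 < K * Real.cos (2*π*z) :=
        (ContinuousAt.eventually_lt continuousAt_const hgc (by linarith)).filter_mono
          nhdsWithin_le_nhds
      have hev : prof K =ᶠ[𝓝[>] y] (fun z => K * Real.cos (2*π*z)) := by
        filter_upwards [hup, hlt] with z ha hb
        exact clamp_of_mem (le_of_lt ha) (le_of_lt hb)
      exact (hgy.hasDerivWithinAt).congr_of_eventuallyEq hev (by rw [hproy, h1])
  · -- strictly above 1 : locally constant 1
    have hev : prof K =ᶠ[𝓝 y] (fun _ => (1:ℝ)) := by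
      filter_upwards [ContinuousAt.eventually_lt continuousAt_const hgc h1] with z hz
      exact clamp_of_one_le (le_of_lt hz)
    have hcond : ¬ profCond K y := by
      rintro (hc | ⟨hc, _⟩ | ⟨hc, _⟩)
      · rw [abs_lt] at hc; linarith [hc.2]
      · linarith
      · linarith
    rw [profD, if_neg hcond]
    exact ((hasDerivAt_const y (1:ℝ)).congr_of_eventuallyEq hev).hasDerivWithinAt

lemma measurable_profD (K : ℝ) : Measurable (profD K) := by
  have m1 : Measurable fun y => K * Real.cos (2*π*y) := by fun_prop
  have m2 : Measurable fun y => Real.sin (2*π*y) := by fun_prop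
  have hset : MeasurableSet {y | profCond K y} := by
    have : {y | profCond K y} = ({y | |K * Real.cos (2*π*y)| < 1} ∪
        (({y | K * Real.cos (2*π*y) = 1} ∩ {y | 0 < Real.sin (2*π*y)}) ∪
         ({y | K * Real.cos (2*π*y) = -1} ∩ {y | Real.sin (2*π*y) < 0}))) := by
      ext y; simp only [profCond, mem_setOf_eq, mem_union, mem_inter_iff]
    rw [this]
    exact (measurableSet_lt m1.abs measurable_const).union
      (((measurableSet_eq_fun m1 measurable_const).inter
          (measurableSet_lt measurable_const m2)).union
        ((measurableSet_eq_fun m1 measurable_const).inter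
          (measurableSet_lt m2 measurable_const)))
  exact Measurable.ite hset (by fun_prop) measurable_const

lemma intervalIntegrable_of_bdd {g : ℝ → ℝ} {c a b : ℝ} (hm : Measurable g)
    (hb : ∀ y, |g y| ≤ c) : IntervalIntegrable g volume a b := by
  refine IntervalIntegrable.mono_fun' (g := fun _ => c) intervalIntegrable_const
    hm.aestronglyMeasurable (ae_of_all _ (fun y => ?_))
  simpa using hb y

lemma profD_intInt {K : ℝ} (hK : 16 ≤ K) (a b : ℝ) :
    IntervalIntegrable (profD K) volume a b :=
  intervalIntegrable_of_bdd (measurable_profD K) (profD_bound hK)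

lemma prof_ftc {K : ℝ} (hK : 16 ≤ K) (a b : ℝ) :
    ∫ y in a..b, profD K y = prof K b - prof K a := by
  rcases le_total a b with hab | hab
  · exact integral_eq_sub_of_hasDeriv_right_of_le hab ((prof_cont K).continuousOn)
      (fun x _ => prof_hasDerivWithinAt hK x) (profD_intInt hK a b)
  · rw [intervalIntegral.integral_symm,
      integral_eq_sub_of_hasDeriv_right_of_le hab ((prof_cont K).continuousOn)
        (fun x _ => prof_hasDerivWithinAt hK x) (profD_intInt hK b a)]
    ring

lemma profD_nonpos {K : ℝ} (hK : 16 ≤ K) {y : ℝ} (hy : y ∈ Icc (0:ℝ) (1/2)) :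
    profD K y ≤ 0 := by
  have hs : 0 ≤ Real.sin (2*π*y) := by
    apply Real.sin_nonneg_of_nonneg_of_le_pi
    · nlinarith [pi_pos, hy.1]
    · nlinarith [pi_pos, hy.2]
  rw [profD]
  split_ifs
  · nlinarith [mul_nonneg (le_of_lt (mul_pos Real.two_pi_pos (show (0:ℝ) < K by linarith))) hs]
  · exact le_refl 0

lemma profD_nonneg {K : ℝ} (hK : 16 ≤ K) {y : ℝ} (hy : y ∈ Icc (1/2:ℝ) 1) :
    0 ≤ profD K y := by
  have hs : Real.sin (2*π*y) ≤ 0 := by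
    have h1 : Real.sin (2*π*y - π) = -Real.sin (2*π*y) := Real.sin_sub_pi _
    have h2 : 0 ≤ Real.sin (2*π*y - π) := by
      apply Real.sin_nonneg_of_nonneg_of_le_pi
      · nlinarith [pi_pos, hy.1]
      · nlinarith [pi_pos, hy.2]
    linarith
  rw [profD]
  split_ifs
  · nlinarith [mul_nonneg (le_of_lt (mul_pos Real.two_pi_pos
      (show (0:ℝ) < K by linarith))) (neg_nonneg.2 hs)]
  · exact le_refl 0

lemma profD_abs_int {K : ℝ} (hK : 16 ≤ K) : ∫ y in (0:ℝ)..1, |profD K y| = 4 := by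
  have hint : ∀ a b : ℝ, IntervalIntegrable (fun y => |profD K y|) volume a b :=
    fun a b => (profD_intInt hK a b).abs
  rw [← intervalIntegral.integral_add_adjacent_intervals (b := 1/2) (hint 0 _) (hint _ 1)]
  have e1 : ∫ y in (0:ℝ)..(1/2), |profD K y| = -(prof K (1/2) - prof K 0) := by
    rw [← prof_ftc hK, ← intervalIntegral.integral_neg]
    apply intervalIntegral.integral_congr
    intro y hy
    rw [uIcc_of_le (by norm_num : (0:ℝ) ≤ 1/2)] at hy
    exact abs_of_nonpos (profD_nonpos hK hy)
  have e2 : ∫ y in (1/2:ℝ)..1, |profD K y| = prof K 1 - prof K (1/2) := by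
    rw [← prof_ftc hK]
    apply intervalIntegral.integral_congr
    intro y hy
    rw [uIcc_of_le (by norm_num : (1/2:ℝ) ≤ 1)] at hy
    exact abs_of_nonneg (profD_nonneg hK hy)
  rw [e1, e2, prof_zero hK, prof_half hK, prof_one hK]
  norm_num

lemma prof_int_zero (K : ℝ) : ∫ y in (0:ℝ)..1, prof K y = 0 := by
  have hint : ∀ a b : ℝ, IntervalIntegrable (prof K) volume a b :=
    fun a b => ((prof_cont K).intervalIntegrable a b)
  rw [← intervalIntegral.integral_add_adjacent_intervals (b := 1/2) (hint 0 _) (hint _ 1)]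
  have e2 : ∫ y in (1/2:ℝ)..1, prof K y = ∫ y in (0:ℝ)..(1/2), prof K (y + 1/2) := by
    rw [intervalIntegral.integral_comp_add_right (fun z => prof K z) (1/2)]
    norm_num
  have e3 : ∫ y in (0:ℝ)..(1/2), prof K (y + 1/2) = -∫ y in (0:ℝ)..(1/2), prof K y := by
    rw [← intervalIntegral.integral_neg]
    apply intervalIntegral.integral_congr
    intro y _
    exact prof_anti K y
  rw [e2, e3]
  ring

lemma prof_key {K : ℝ} (hK : 16 ≤ K) (y : ℝ) :
    (prof K y = 1 ∨ prof K y = -1) ∨ 2*π*Real.sqrt (K^2-1) ≤ |profD K y| := by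
  rcases le_or_gt 1 (K * Real.cos (2*π*y)) with h1 | h1
  · exact Or.inl (Or.inl (clamp_of_one_le h1))
  rcases le_or_gt (K * Real.cos (2*π*y)) (-1) with h2 | h2
  · exact Or.inl (Or.inr (clamp_of_le_neg_one h2))
  right
  have hcond : profCond K y := Or.inl (abs_lt.2 ⟨h2, h1⟩)
  rw [profD, if_pos hcond, abs_neg]
  have h3 : |2*π*K*Real.sin (2*π*y)| = 2*π*|K*Real.sin (2*π*y)| := by
    rw [show 2*π*K*Real.sin (2*π*y) = 2*π*(K*Real.sin (2*π*y)) by ring, abs_mul,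
      abs_of_nonneg (by positivity : (0:ℝ) ≤ 2*π)]
  rw [h3]
  have h4 : Real.sqrt (K^2-1) ≤ |K*Real.sin (2*π*y)| := by
    rw [← Real.sqrt_sq_eq_abs]
    apply Real.sqrt_le_sqrt
    have hpyth := Real.sin_sq_add_cos_sq (2*π*y)
    have h5 : (K * Real.cos (2*π*y))^2 < 1 := by nlinarith
    have h6 : (K*Real.sin (2*π*y))^2 = K^2 - (K*Real.cos (2*π*y))^2 := by
      linear_combination K^2 * hpyth
    linarith
  exact mul_le_mul_of_nonneg_left h4 (by positivity)

lemma sqrt_K_lb {K : ℝ} (hK : 16 ≤ K) : K/2 ≤ Real.sqrt (K^2 - 1) := by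
  have h : (K/2)^2 ≤ K^2 - 1 := by nlinarith
  calc K/2 = Real.sqrt ((K/2)^2) := (Real.sqrt_sq (by linarith)).symm
  _ ≤ Real.sqrt (K^2-1) := Real.sqrt_le_sqrt h

lemma prof_pointwise_W {K : ℝ} (hK : 16 ≤ K) {W : ℝ → ℝ} {M : ℝ} (hM0 : 0 ≤ M)
    (hMb : ∀ x ∈ Icc (-1:ℝ) 1, W x ≤ M) (hW1 : W 1 = 0) (hWm1 : W (-1) = 0) (y : ℝ) :
    W (prof K y) ≤ M/(π*K) * |profD K y| := by
  have hπK : (0:ℝ) < π*K := by nlinarith [pi_pos]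
  rcases prof_key hK y with (h | h) | h
  · rw [h, hW1]; positivity
  · rw [h, hWm1]; positivity
  · have h2 : π*K ≤ |profD K y| := by
      have := sqrt_K_lb hK
      nlinarith [pi_pos]
    calc W (prof K y) ≤ M := hMb _ (prof_mem K y)
    _ = M/(π*K) * (π*K) := by field_simp
    _ ≤ M/(π*K) * |profD K y| := by
        apply mul_le_mul_of_nonneg_left h2; positivity

lemma prof_pointwise_sq {K : ℝ} (hK : 16 ≤ K) (y : ℝ) :
    1 - prof K y^2 ≤ 1/(π*K) * |profD K y| := by
  have hπK : (0:ℝ) < π*K := by nlinarith [pi_pos]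
  rcases prof_key hK y with (h | h) | h
  · rw [h]; norm_num; positivity
  · rw [h]; norm_num; positivity
  · have h2 : π*K ≤ |profD K y| := by
      have := sqrt_K_lb hK
      nlinarith [pi_pos]
    calc 1 - prof K y^2 ≤ 1 := by nlinarith [sq_nonneg (prof K y)]
    _ = 1/(π*K) * (π*K) := by field_simp
    _ ≤ 1/(π*K) * |profD K y| := by
        apply mul_le_mul_of_nonneg_left h2; positivity

lemma int_W_prof {K : ℝ} (hK : 16 ≤ K) {W : ℝ → ℝ} {M : ℝ} (hM0 : 0 ≤ M)
    (hWc : ContinuousOn W (Icc (-1:ℝ) 1))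
    (hMb : ∀ x ∈ Icc (-1:ℝ) 1, W x ≤ M) (hW1 : W 1 = 0) (hWm1 : W (-1) = 0) :
    ∫ y in (0:ℝ)..1, W (prof K y) ≤ 2*M/K := by
  have hπK : (0:ℝ) < π*K := by nlinarith [pi_pos]
  have hcont : Continuous (fun y => W (prof K y)) :=
    hWc.comp_continuous (prof_cont K) (fun y => prof_mem K y)
  have h1 : ∫ y in (0:ℝ)..1, W (prof K y) ≤ ∫ y in (0:ℝ)..1, M/(π*K) * |profD K y| := by
    apply intervalIntegral.integral_mono_on zero_le_one (hcont.intervalIntegrable _ _)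
      (((profD_intInt hK 0 1).abs).const_mul _)
    intro y _
    exact prof_pointwise_W hK hM0 hMb hW1 hWm1 y
  have h2 : ∫ y in (0:ℝ)..1, M/(π*K) * |profD K y| = M/(π*K) * 4 := by
    rw [intervalIntegral.integral_const_mul, profD_abs_int hK]
  rw [h2] at h1
  calc ∫ y in (0:ℝ)..1, W (prof K y) ≤ M/(π*K)*4 := h1
  _ ≤ 2*M/K := by
      rw [div_mul_eq_mul_div, div_le_div_iff₀ hπK (by linarith : (0:ℝ) < K)]
      nlinarith [pi_gt_three, mul_nonneg (mul_nonneg hM0 (show (0:ℝ) ≤ K by linarith))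
        (show (0:ℝ) ≤ π - 2 by nlinarith [pi_gt_three])]

lemma int_prof_sq_lb {K : ℝ} (hK : 16 ≤ K) :
    1 - 2/K ≤ ∫ y in (0:ℝ)..1, prof K y^2 := by
  have hπK : (0:ℝ) < π*K := by nlinarith [pi_pos]
  have hcont : Continuous (fun y => prof K y^2) := (prof_cont K).pow 2
  have h1 : ∫ y in (0:ℝ)..1, (1 - prof K y^2) ≤ ∫ y in (0:ℝ)..1, 1/(π*K) * |profD K y| := by
    apply intervalIntegral.integral_mono_on zero_le_one
      ((continuous_const.sub hcont).intervalIntegrable _ _)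
      (((profD_intInt hK 0 1).abs).const_mul _)
    intro y _
    exact prof_pointwise_sq hK y
  rw [intervalIntegral.integral_const_mul, profD_abs_int hK] at h1
  rw [intervalIntegral.integral_sub (intervalIntegrable_const) (hcont.intervalIntegrable _ _)]
    at h1
  simp only [intervalIntegral.integral_const, smul_eq_mul, sub_zero, one_mul, mul_one] at h1
  have h3 : 1/(π*K)*4 ≤ 2/K := by
    rw [div_mul_eq_mul_div, div_le_div_iff₀ hπK (by linarith : (0:ℝ) < K)]
    nlinarith [pi_gt_three]
  linarith

lemma int_profD_sq {K : ℝ} (hK : 16 ≤ K) :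
    ∫ y in (0:ℝ)..1, profD K y^2 ≤ 8*π*K := by
  have hm : Measurable fun y => profD K y ^2 := (measurable_profD K).pow_const 2
  have h1 : ∫ y in (0:ℝ)..1, profD K y^2 ≤ ∫ y in (0:ℝ)..1, 2*π*K * |profD K y| := by
    apply intervalIntegral.integral_mono_on zero_le_one
      (intervalIntegrable_of_bdd (c := (2*π*K)^2) hm (fun y => ?_))
      (((profD_intInt hK 0 1).abs).const_mul _)
    · intro y _
      have hb := profD_bound hK y
      calc profD K y^2 = |profD K y| * |profD K y| := by rw [← abs_mul, abs_mul_self]; ring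
      _ ≤ 2*π*K * |profD K y| :=
          mul_le_mul_of_nonneg_right hb (abs_nonneg _)
    · have hb := profD_bound hK y
      have h0 : (0:ℝ) ≤ 2*π*K := by positivity
      rw [abs_of_nonneg (sq_nonneg _)]
      have h2 := pow_le_pow_left₀ (abs_nonneg (profD K y)) hb 2
      rw [sq_abs] at h2
      linarith
  rw [intervalIntegral.integral_const_mul, profD_abs_int hK] at h1
  linarith

lemma periodic_scale_int {g : ℝ → ℝ} (hg : Function.Periodic g 1)
    (hint : ∀ a b : ℝ, IntervalIntegrable g volume a b) (n : ℕ) (hn : 1 ≤ n) :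
    ∫ x in (0:ℝ)..1, g (n * x) = ∫ y in (0:ℝ)..1, g y := by
  have hN : (n:ℝ) ≠ 0 := by positivity
  rw [intervalIntegral.integral_comp_mul_left g hN]
  have h2 := hg.intervalIntegral_add_zsmul_eq (n : ℤ) 0 hint
  simp only [zero_add, zsmul_eq_mul, Int.cast_natCast, mul_one] at h2
  rw [mul_zero, mul_one, h2, smul_eq_mul]
  field_simp

lemma setIoo_eq_interval (f : ℝ → ℝ) :
    ∫ x in Ioo (0:ℝ) 1, f x = ∫ x in (0:ℝ)..1, f x := by
  rw [intervalIntegral.integral_of_le zero_le_one, integral_Ioc_eq_integral_Ioo]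

section Primitive
variable {g : ℝ → ℝ} {p : ℝ}

lemma primitive_periodic (hint : ∀ a b : ℝ, IntervalIntegrable g volume a b)
    (hgper : Function.Periodic g p) (hzero : (∫ t in (0:ℝ)..p, g t) = 0) :
    Function.Periodic (fun x => ∫ t in (0:ℝ)..x, g t) p := by
  intro x
  have h1 : ∫ t in (0:ℝ)..(x+p), g t = (∫ t in (0:ℝ)..x, g t) + ∫ t in x..(x+p), g t :=
    (intervalIntegral.integral_add_adjacent_intervals (hint 0 x) (hint x (x+p))).symm
  have h2 : ∫ t in x..(x+p), g t = ∫ t in (0:ℝ)..(0+p), g t := hgper.intervalIntegral_add_eq x 0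
  simp only [zero_add] at h2
  simp [h1, h2, hzero]

lemma primitive_odd (hgeven : ∀ t, g (-t) = g t) (x : ℝ) :
    (∫ t in (0:ℝ)..(-x), g t) = -∫ t in (0:ℝ)..x, g t := by
  have h : (∫ t in (0:ℝ)..x, g (-t)) = ∫ t in (-x)..(0:ℝ), g t := by
    simpa using intervalIntegral.integral_comp_neg (a := (0:ℝ)) (b := x) (fun t => g t)
  have h2 : (∫ t in (0:ℝ)..x, g (-t)) = ∫ t in (0:ℝ)..x, g t :=
    intervalIntegral.integral_congr (fun t _ => hgeven t)
  have h3 : (∫ t in (0:ℝ)..(-x), g t) = -∫ t in (-x)..(0:ℝ), g t :=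
    intervalIntegral.integral_symm _ _
  rw [h3, ← h, h2]

lemma primitive_bound (hint : ∀ a b : ℝ, IntervalIntegrable g volume a b)
    (hgper : Function.Periodic g p) (hp : 0 < p) (hzero : (∫ t in (0:ℝ)..p, g t) = 0)
    (hb : ∀ t, |g t| ≤ 1) (x : ℝ) : |∫ t in (0:ℝ)..x, g t| ≤ p := by
  have hGper := primitive_periodic hint hgper hzero
  have hkey : (∫ t in (0:ℝ)..x, g t) = ∫ t in (0:ℝ)..(x - ⌊x/p⌋ * p), g t :=
    (hGper.sub_int_mul_eq (n := ⌊x/p⌋)).symm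
  set y := x - ⌊x/p⌋ * p with hy
  have hy0 : 0 ≤ y := Int.sub_floor_div_mul_nonneg x hp
  have hyp : y < p := Int.sub_floor_div_mul_lt x hp
  rw [hkey]
  have h1 : |∫ t in (0:ℝ)..y, g t| ≤ ∫ t in (0:ℝ)..y, |g t| :=
    intervalIntegral.abs_integral_le_integral_abs hy0
  have h2 : ∫ t in (0:ℝ)..y, |g t| ≤ ∫ t in (0:ℝ)..y, (1:ℝ) := by
    apply intervalIntegral.integral_mono_on hy0 ((hint 0 y).abs) intervalIntegrable_const
    exact fun t _ => hb t
  have h3 : ∫ t in (0:ℝ)..y, (1:ℝ) = y := by simp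
  linarith

end Primitive


instance : IsFiniteMeasure (volume.restrict (Ioo (0:ℝ) 1)) := by
  constructor
  rw [Measure.restrict_apply_univ, Real.volume_Ioo]
  norm_num

lemma volume_Ioo01 : (volume.restrict (Ioo (0:ℝ) 1)) univ = 1 := by
  rw [Measure.restrict_apply_univ, Real.volume_Ioo]
  norm_num

lemma integrableOn_of_continuous {f : ℝ → ℝ} (hf : Continuous f) :
    IntegrableOn f (Ioo (0:ℝ) 1) volume :=
  (hf.integrableOn_Icc (a := 0) (b := 1)).mono_set Ioo_subset_Icc_self

lemma integrableOn_of_bdd {f : ℝ → ℝ} {c : ℝ} (hm : Measurable f) (hb : ∀ x, |f x| ≤ c) :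
    IntegrableOn f (Ioo (0:ℝ) 1) volume := by
  apply Integrable.mono' (integrable_const c) hm.aestronglyMeasurable
  exact ae_of_all _ (fun x => by simpa using hb x)

lemma competitor {W : ℝ → ℝ} {M : ℝ} (hWc : ContinuousOn W (Icc (-1:ℝ) 1)) (hM0 : 0 ≤ M)
    (hMb : ∀ x ∈ Icc (-1:ℝ) 1, W x ≤ M) (hW1 : W 1 = 0) (hWm1 : W (-1) = 0)
    {Λ κ σ b : ℝ} (hΛ : 0 < Λ) (hκ : 0 < κ) (hσ : 0 < σ) (hb : 0 < b)
    {K : ℝ} (hK : 16 ≤ K) {n : ℕ} (hn : 1 ≤ n) :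
    ∃ u u' h h' h'' : ℝ → ℝ, IsAdmissible u u' h h' h'' ∧
      energyF W b σ κ Λ u u' h' h'' ≤
        2*M/K + b/2 * (8*π*(n:ℝ)^2*K) + σ/2 * (Λ/(κ*(n:ℝ)))^2 - Λ^2/(2*κ) * (1 - 2/K) := by
  have hNpos : (0:ℝ) < (n:ℝ) := by exact_mod_cast Nat.lt_of_lt_of_le Nat.zero_lt_one hn
  have hNne : (n:ℝ) ≠ 0 := ne_of_gt hNpos
  set u : ℝ → ℝ := fun x => prof K ((n:ℝ) * x) with hu_def
  set u' : ℝ → ℝ := fun x => (n:ℝ) * profD K ((n:ℝ) * x) with hu'_def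
  set G : ℝ → ℝ := fun x => ∫ t in (0:ℝ)..x, u t with hG_def
  set h' : ℝ → ℝ := fun x => -(Λ/κ) * G x with hh'_def
  set G2 : ℝ → ℝ := fun x => ∫ t in (0:ℝ)..x, G t with hG2_def
  set h : ℝ → ℝ := fun x => (Λ/κ) * (∫ z in Ioo (0:ℝ) 1, G2 z) - (Λ/κ) * G2 x with hh_def
  set h'' : ℝ → ℝ := fun x => -(Λ/κ) * u x with hh''_def
  -- basic facts about u
  have hu_cont : Continuous u := (prof_cont K).comp (continuous_const.mul continuous_id)
  have hu_mem : ∀ x, u x ∈ Icc (-1:ℝ) 1 := fun x => prof_mem K _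
  have hu_abs : ∀ x, |u x| ≤ 1 := fun x => abs_le.2 ⟨(hu_mem x).1, (hu_mem x).2⟩
  have hu_int : ∀ a c : ℝ, IntervalIntegrable u volume a c :=
    fun a c => hu_cont.intervalIntegrable a c
  have hu'_meas : Measurable u' :=
    ((measurable_profD K).comp (measurable_const.mul measurable_id)).const_mul _
  have hu'_bd : ∀ x, |u' x| ≤ (n:ℝ) * (2*π*K) := by
    intro x
    rw [hu'_def, abs_mul, abs_of_nonneg (le_of_lt hNpos)]
    exact mul_le_mul_of_nonneg_left (profD_bound hK _) (le_of_lt hNpos)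
  -- periodicity of u and u'
  have hprofn : Function.Periodic (prof K) ((n:ℝ)) := by
    simpa using (prof_per K).nat_mul n
  have hprofDn : Function.Periodic (profD K) ((n:ℝ)) := by
    simpa using (profD_per K).nat_mul n
  have hu_per : Function.Periodic u 1 := fun x => by
    simp only [hu_def]; rw [mul_add, mul_one]; exact hprofn _
  have hu'_per : Function.Periodic u' 1 := fun x => by
    simp only [hu'_def]; rw [mul_add, mul_one, hprofDn _]
  have hu_per_p : Function.Periodic u (1/(n:ℝ)) := fun x => by
    simp only [hu_def]
    rw [mul_add, mul_one_div, div_self hNne]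
    exact prof_per K _
  have hu_even : ∀ t, u (-t) = u t := fun t => by
    simp only [hu_def]
    rw [show (n:ℝ) * (-t) = -((n:ℝ)*t) by ring]
    exact prof_even K _
  -- u FTC
  have hu_ftc : ∀ x : ℝ, u x = u 0 + ∫ t in (0:ℝ)..x, u' t := by
    intro x
    have h1 : (∫ t in (0:ℝ)..x, u' t) = (n:ℝ) * ∫ t in (0:ℝ)..x, profD K ((n:ℝ)*t) :=
      intervalIntegral.integral_const_mul _ _
    rw [h1, intervalIntegral.integral_comp_mul_left (profD K) hNne, mul_zero, smul_eq_mul,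
      ← mul_assoc, mul_inv_cancel₀ hNne, one_mul, prof_ftc hK]
    simp only [hu_def, mul_zero]
    ring
  -- u mean on the unit cell
  have hu_mean1 : (∫ t in (0:ℝ)..1, u t) = 0 := by
    have := periodic_scale_int (prof_per K) (fun a c => (prof_cont K).intervalIntegrable a c) n hn
    rw [hu_def]
    exact this.trans (prof_int_zero K)
  have hu_mean : (∫ x in Ioo (0:ℝ) 1, u x) = 0 := by
    rw [setIoo_eq_interval]; exact hu_mean1
  -- G facts
  have hzero_p : (∫ t in (0:ℝ)..(1/(n:ℝ)), u t) = 0 := by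
    rw [hu_def, intervalIntegral.integral_comp_mul_left (prof K) hNne, mul_zero,
      mul_one_div_cancel hNne, prof_int_zero K, smul_zero]
  have hG_per_p : Function.Periodic G (1/(n:ℝ)) := primitive_periodic hu_int hu_per_p hzero_p
  have hG_per1 : Function.Periodic G 1 := primitive_periodic hu_int hu_per hu_mean1
  have hG_bd : ∀ x, |G x| ≤ 1/(n:ℝ) :=
    primitive_bound hu_int hu_per_p (by positivity) hzero_p hu_abs
  have hG_cont : Continuous G := intervalIntegral.continuous_primitive hu_int 0
  have hG_odd : ∀ x, G (-x) = -G x := fun x => primitive_odd hu_even x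
  have hG_zero : G 0 = 0 := by rw [hG_def]; simp
  have hG_int0 : (∫ t in (0:ℝ)..1, G t) = 0 := by
    have e1 : (∫ t in (-(1/2):ℝ)..(-(1/2)+1), G t) = ∫ t in (0:ℝ)..(0+1), G t :=
      hG_per1.intervalIntegral_add_eq (-(1/2)) 0
    have e2 : (∫ t in (-(1/2):ℝ)..(-(1/2)+1), G t)
        = (∫ t in (-(1/2):ℝ)..(0:ℝ), G t) + ∫ t in (0:ℝ)..(1/2:ℝ), G t := by
      rw [intervalIntegral.integral_add_adjacent_intervals
        (hG_cont.intervalIntegrable _ _) (hG_cont.intervalIntegrable _ _)]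
      norm_num
    have e3 : (∫ t in (-(1/2):ℝ)..(0:ℝ), G t) = -∫ t in (0:ℝ)..(1/2:ℝ), G t := by
      have e4 : (∫ t in (0:ℝ)..(1/2:ℝ), G (-t)) = ∫ t in (-(1/2):ℝ)..(0:ℝ), G t := by
        simpa using intervalIntegral.integral_comp_neg (a := (0:ℝ)) (b := (1/2:ℝ))
          (fun t => G t)
      have e5 : (∫ t in (0:ℝ)..(1/2:ℝ), G (-t)) = -∫ t in (0:ℝ)..(1/2:ℝ), G t := by
        rw [← intervalIntegral.integral_neg]
        exact intervalIntegral.integral_congr (fun t _ => hG_odd t)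
      rw [← e4, e5]
    rw [zero_add] at e1
    rw [← e1, e2, e3]
    ring
  have hG_unit : ∀ x : ℝ, (∫ t in x..(x+1), G t) = 0 := fun x => by
    rw [hG_per1.intervalIntegral_add_eq x 0, zero_add, hG_int0]
  -- G2 facts
  have hG2_cont : Continuous G2 :=
    intervalIntegral.continuous_primitive (fun a c => hG_cont.intervalIntegrable a c) 0
  have hG2_per : ∀ x, G2 (x+1) = G2 x := by
    intro x
    have e := intervalIntegral.integral_add_adjacent_intervals (μ := volume)
      (hG_cont.intervalIntegrable 0 x) (hG_cont.intervalIntegrable x (x+1))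
    rw [hG_unit x] at e
    rw [hG2_def]
    simp only
    rw [← e, add_zero]
  -- admissibility
  refine ⟨u, u', h, h', h'', ⟨hu_per, hu'_per, hu_ftc, hu_mem, ?_, hu_mean, ?_, ?_, ?_, ?_, ?_,
    ?_, ?_⟩, ?_⟩
  · -- u'_l2
    exact MemLp.of_bound hu'_meas.aestronglyMeasurable _ (ae_of_all _ (fun x => by
      simpa using hu'_bd x))
  · -- h_per
    intro x
    simp only [hh_def, hG2_per x]
  · -- h'_per
    intro x
    simp only [hh'_def, hG_per1 x]
  · -- h''_per
    intro x
    simp only [hh''_def, hu_per x]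
  · -- h_ftc
    intro x
    have e1 : (∫ t in (0:ℝ)..x, h' t) = -(Λ/κ) * G2 x := by
      rw [hh'_def, hG2_def]
      simp only
      exact intervalIntegral.integral_const_mul _ _
    rw [e1, hh_def]
    simp only [hG2_def]
    simp
    ring
  · -- h'_ftc
    intro x
    have e1 : (∫ t in (0:ℝ)..x, h'' t) = -(Λ/κ) * G x := by
      rw [hh''_def, hG_def]
      simp only
      exact intervalIntegral.integral_const_mul _ _
    rw [e1, hh'_def]
    simp only [hG_zero]
    ring
  · -- h''_l2
    refine MemLp.of_bound ((continuous_const.mul hu_cont).aestronglyMeasurable) (Λ/κ) (ae_of_all _ ?_)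
    intro x
    simp only [hh''_def, norm_neg, Real.norm_eq_abs, abs_mul, abs_neg]
    rw [abs_of_nonneg (by positivity : (0:ℝ) ≤ Λ/κ)]
    nlinarith [hu_abs x, abs_nonneg (u x), div_pos hΛ hκ]
  · -- h_mean
    have hi1 : IntegrableOn G2 (Ioo (0:ℝ) 1) volume := integrableOn_of_continuous hG2_cont
    rw [hh_def]
    simp only
    rw [integral_sub (integrable_const _) (hi1.const_mul _), MeasureTheory.integral_const,
      measureReal_def, volume_Ioo01, MeasureTheory.integral_const_mul]
    simp
  · -- energy bound
    have hWu_cont : Continuous (fun x => W (u x)) :=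
      hWc.comp_continuous hu_cont hu_mem
    have iW : IntegrableOn (fun x => W (u x)) (Ioo (0:ℝ) 1) volume :=
      integrableOn_of_continuous hWu_cont
    have hu'sq_bd : ∀ x, |u' x ^ 2| ≤ ((n:ℝ) * (2*π*K))^2 := by
      intro x
      rw [abs_of_nonneg (sq_nonneg _)]
      have h2 := pow_le_pow_left₀ (abs_nonneg (u' x)) (hu'_bd x) 2
      rw [sq_abs] at h2
      exact h2
    have iu'sq : IntegrableOn (fun x => u' x^2) (Ioo (0:ℝ) 1) volume :=
      integrableOn_of_bdd (hu'_meas.pow_const 2) hu'sq_bd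
    have ih'sq : IntegrableOn (fun x => h' x^2) (Ioo (0:ℝ) 1) volume :=
      integrableOn_of_continuous ((continuous_const.mul hG_cont).pow 2)
    have iusq : IntegrableOn (fun x => u x^2) (Ioo (0:ℝ) 1) volume :=
      integrableOn_of_continuous (hu_cont.pow 2)
    have hpoint : ∀ x, W (u x) + b / 2 * u' x ^ 2 + σ / 2 * h' x ^ 2 + κ / 2 * h'' x ^ 2
        + Λ * u x * h'' x
        = W (u x) + b/2 * u' x^2 + σ/2 * h' x^2 - Λ^2/(2*κ) * u x^2 := by
      intro x
      rw [hh''_def]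
      simp only
      field_simp
      ring
    have e0 : energyF W b σ κ Λ u u' h' h''
        = ∫ x in Ioo (0:ℝ) 1, (W (u x) + b/2 * u' x^2 + σ/2 * h' x^2 - Λ^2/(2*κ) * u x^2) := by
      rw [energyF]
      exact integral_congr_ae (ae_of_all _ hpoint)
    have e1 : (∫ x in Ioo (0:ℝ) 1,
          (W (u x) + b/2 * u' x^2 + σ/2 * h' x^2 - Λ^2/(2*κ) * u x^2))
        = (∫ x in Ioo (0:ℝ) 1, W (u x)) + b/2 * (∫ x in Ioo (0:ℝ) 1, u' x^2)
          + σ/2 * (∫ x in Ioo (0:ℝ) 1, h' x^2) - Λ^2/(2*κ) * (∫ x in Ioo (0:ℝ) 1, u x^2) := by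
      have iA : Integrable (fun x => b/2 * u' x^2) (volume.restrict (Ioo (0:ℝ) 1)) :=
        iu'sq.const_mul _
      have iB : Integrable (fun x => W (u x) + b/2 * u' x^2) (volume.restrict (Ioo (0:ℝ) 1)) :=
        iW.add iA
      have iC : Integrable (fun x => σ/2 * h' x^2) (volume.restrict (Ioo (0:ℝ) 1)) :=
        ih'sq.const_mul _
      have iD : Integrable (fun x => W (u x) + b/2 * u' x^2 + σ/2 * h' x^2)
          (volume.restrict (Ioo (0:ℝ) 1)) := iB.add iC
      have iE : Integrable (fun x => Λ^2/(2*κ) * u x^2) (volume.restrict (Ioo (0:ℝ) 1)) :=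
        iusq.const_mul _
      rw [integral_sub iD iE, integral_add iB iC, integral_add iW iA, MeasureTheory.integral_const_mul,
        MeasureTheory.integral_const_mul, MeasureTheory.integral_const_mul]
    have bW : (∫ x in Ioo (0:ℝ) 1, W (u x)) ≤ 2*M/K := by
      rw [setIoo_eq_interval]
      have hper : Function.Periodic (fun y => W (prof K y)) 1 := fun y => by
        simp [prof_per K y]
      have hsc := periodic_scale_int hper
        (fun a c => (hWc.comp_continuous (prof_cont K) (prof_mem K)).intervalIntegrable a c) n hn
      exact hsc.trans_le (int_W_prof hK hM0 hWc hMb hW1 hWm1)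
    have bu' : (∫ x in Ioo (0:ℝ) 1, u' x^2) ≤ (n:ℝ)^2 * (8*π*K) := by
      rw [setIoo_eq_interval]
      have e : ∀ x ∈ uIcc (0:ℝ) 1, u' x^2 = (n:ℝ)^2 * profD K ((n:ℝ)*x)^2 := fun x _ => by
        rw [hu'_def]; ring
      rw [intervalIntegral.integral_congr e, intervalIntegral.integral_const_mul]
      have hper : Function.Periodic (fun y => profD K y^2) 1 := fun y => by
        simp [profD_per K y]
      have hsc := periodic_scale_int hper (fun a c => intervalIntegrable_of_bdd
        ((measurable_profD K).pow_const 2) (c := (2*π*K)^2) (fun y => by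
          rw [abs_of_nonneg (sq_nonneg _)]
          have h2 := pow_le_pow_left₀ (abs_nonneg (profD K y)) (profD_bound hK y) 2
          rw [sq_abs] at h2
          exact h2)) n hn
      rw [hsc]
      exact mul_le_mul_of_nonneg_left (int_profD_sq hK) (by positivity)
    have bh' : (∫ x in Ioo (0:ℝ) 1, h' x^2) ≤ (Λ/(κ*(n:ℝ)))^2 := by
      have hpt : ∀ x ∈ Ioo (0:ℝ) 1, h' x^2 ≤ (Λ/(κ*(n:ℝ)))^2 := by
        intro x _
        rw [hh'_def]
        simp only
        have h1 : |(-(Λ/κ) * G x)| ≤ Λ/(κ*(n:ℝ)) := by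
          rw [abs_mul, abs_neg, abs_of_nonneg (by positivity : (0:ℝ) ≤ Λ/κ)]
          calc Λ/κ * |G x| ≤ Λ/κ * (1/(n:ℝ)) :=
              mul_le_mul_of_nonneg_left (hG_bd x) (by positivity)
          _ = Λ/(κ*(n:ℝ)) := by field_simp
        calc (-(Λ/κ) * G x)^2 = |(-(Λ/κ) * G x)|^2 := (sq_abs _).symm
        _ ≤ (Λ/(κ*(n:ℝ)))^2 := pow_le_pow_left₀ (abs_nonneg _) h1 2
      calc (∫ x in Ioo (0:ℝ) 1, h' x^2) ≤ ∫ _x in Ioo (0:ℝ) 1, (Λ/(κ*(n:ℝ)))^2 :=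
          setIntegral_mono_on ih'sq (integrable_const _) measurableSet_Ioo hpt
      _ = (Λ/(κ*(n:ℝ)))^2 := by
          rw [setIntegral_const, Real.volume_real_Ioo]
          norm_num
    have busq : 1 - 2/K ≤ ∫ x in Ioo (0:ℝ) 1, u x^2 := by
      rw [setIoo_eq_interval]
      have hper : Function.Periodic (fun y => prof K y^2) 1 := fun y => by
        simp [prof_per K y]
      have hsc := periodic_scale_int hper
        (fun a c => ((prof_cont K).pow 2).intervalIntegrable a c) n hn
      calc 1 - 2/K ≤ ∫ y in (0:ℝ)..1, prof K y^2 := int_prof_sq_lb hK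
      _ = ∫ x in (0:ℝ)..1, prof K ((n:ℝ)*x)^2 := hsc.symm
    rw [e0, e1]
    have hf1 : b/2 * (∫ x in Ioo (0:ℝ) 1, u' x^2) ≤ b/2 * (8*π*(n:ℝ)^2*K) := by
      calc b/2 * (∫ x in Ioo (0:ℝ) 1, u' x^2) ≤ b/2 * ((n:ℝ)^2 * (8*π*K)) :=
          mul_le_mul_of_nonneg_left bu' (by positivity)
      _ = b/2 * (8*π*(n:ℝ)^2*K) := by ring
    have hf2 : σ/2 * (∫ x in Ioo (0:ℝ) 1, h' x^2) ≤ σ/2 * (Λ/(κ*(n:ℝ)))^2 :=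
      mul_le_mul_of_nonneg_left bh' (by positivity)
    have hf4 : Λ^2/(2*κ) * (1 - 2/K) ≤ Λ^2/(2*κ) * (∫ x in Ioo (0:ℝ) 1, u x^2) :=
      mul_le_mul_of_nonneg_left busq (by positivity)
    linarith


set_option maxHeartbeats 1000000 in
lemma arith_main {M κ σ b Λ C K N : ℝ} (hM0 : 0 ≤ M) (hκ : 0 < κ) (hσ : 0 < σ)
    (hb : 0 < b) (hΛ : 0 < Λ) (hC_def : C = 10^6*(1+M))
    (hK16 : (16:ℝ) ≤ K) (hKM : 32*M*κ/Λ^2 ≤ K) (hKle : K ≤ 16 + 32*M*κ/Λ^2)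
    (hNpos : 0 < N) (hNlb' : 8*σ ≤ κ*N^2) (hNub' : κ*N^2 ≤ 16*σ + 2*κ)
    (hbσ : C*(b*σ) ≤ Λ^2) (hbκ : C*(b*κ) ≤ Λ^2)
    (hbσκ : C^2*(b*σ*κ) ≤ Λ^4) (hbκ2 : C^2*(b*κ^2) ≤ Λ^4) :
    2*M/K + b/2 * (8*π*N^2*K) + σ/2 * (Λ/(κ*N))^2 - Λ^2/(2*κ) * (1 - 2/K)
      ≤ -(1/8 * Λ^2 / κ) := by
  have hC : 0 < C := by rw [hC_def]; positivity
  have hKpos : (0:ℝ) < K := by linarith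
  have hq1 : 0 ≤ b*N^2*κ := by positivity
  have hq2 : 0 ≤ b*N^2*κ^2 := by positivity
  have hbn1 : C*(b*N^2*κ) ≤ 18*Λ^2 := by
    have h1 : b*N^2*κ ≤ 16*b*σ + 2*b*κ := by nlinarith [mul_le_mul_of_nonneg_left hNub' hb.le]
    calc C*(b*N^2*κ) ≤ C*(16*b*σ + 2*b*κ) := mul_le_mul_of_nonneg_left h1 hC.le
    _ = 16*(C*(b*σ)) + 2*(C*(b*κ)) := by ring
    _ ≤ 16*Λ^2 + 2*Λ^2 := by linarith
    _ = 18*Λ^2 := by ring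
  have hbn2 : C^2*(b*N^2*κ^2) ≤ 18*Λ^4 := by
    have h1 : b*N^2*κ^2 ≤ 16*b*σ*κ + 2*b*κ^2 := by
      nlinarith [mul_le_mul_of_nonneg_left hNub' (mul_nonneg hb.le hκ.le)]
    calc C^2*(b*N^2*κ^2) ≤ C^2*(16*b*σ*κ + 2*b*κ^2) :=
        mul_le_mul_of_nonneg_left h1 (by positivity)
    _ = 16*(C^2*(b*σ*κ)) + 2*(C^2*(b*κ^2)) := by ring
    _ ≤ 16*Λ^4 + 2*Λ^4 := by linarith
    _ = 18*Λ^4 := by ring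
  have hC6 : (10:ℝ)^6 ≤ C := by rw [hC_def]; nlinarith [hM0]
  have hCsq : 4*(10:ℝ)^12*M ≤ C^2 := by
    have h0 : (0:ℝ) ≤ 10^12*(1-M)^2 := by positivity
    calc 4*(10:ℝ)^12*M = 10^12*(1+M)^2 - 10^12*(1-M)^2 := by ring
    _ ≤ 10^12*(1+M)^2 := by linarith
    _ = C^2 := by rw [hC_def]; ring
  have hT1 : 2*M/K ≤ Λ^2/(16*κ) := by
    rw [div_le_div_iff₀ hKpos (by positivity)]
    have h32 : 32*M*κ ≤ K*Λ^2 := by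
      have := (div_le_iff₀ (by positivity : (0:ℝ) < Λ^2)).1 hKM
      linarith
    linarith
  have hT2 : Λ^2/(2*κ) * (2/K) ≤ Λ^2/(16*κ) := by
    have h1 : 2/K ≤ 2/16 := by
      apply div_le_div_of_nonneg_left (by norm_num) (by norm_num) hK16
    calc Λ^2/(2*κ) * (2/K) ≤ Λ^2/(2*κ) * (2/16) :=
        mul_le_mul_of_nonneg_left h1 (by positivity)
    _ = Λ^2/(16*κ) := by ring
  have hT3 : σ/2 * (Λ/(κ*N))^2 ≤ Λ^2/(16*κ) := by
    have e : σ/2*(Λ/(κ*N))^2 = σ*Λ^2/(2*(κ*N)^2) := by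
      rw [div_pow]
      ring
    rw [e, div_le_div_iff₀ (by positivity) (by positivity)]
    linarith [mul_le_mul_of_nonneg_left hNlb' (show (0:ℝ) ≤ 2*κ*Λ^2 by positivity)]
  have hi : 64*π*b*N^2 ≤ Λ^2/(16*κ) := by
    rw [le_div_iff₀ (by positivity)]
    have h1 : (10:ℝ)^6 * (b*N^2*κ) ≤ 18*Λ^2 :=
      le_trans (mul_le_mul_of_nonneg_right hC6 hq1) hbn1
    have hπq : π*(b*N^2*κ) ≤ 4*(b*N^2*κ) := by
      nlinarith [Real.pi_le_four, hq1]
    calc 64*π*b*N^2*(16*κ) = 1024*(π*(b*N^2*κ)) := by ring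
    _ ≤ 1024*(4*(b*N^2*κ)) := by linarith
    _ ≤ Λ^2 := by nlinarith [h1, hq1, sq_nonneg Λ]
  have hii : 128*π*M*b*N^2*κ/Λ^2 ≤ Λ^2/(16*κ) := by
    rw [div_le_div_iff₀ (by positivity) (by positivity)]
    have h2 : 4*(10:ℝ)^12*(M*(b*N^2*κ^2)) ≤ 18*Λ^4 := by
      calc 4*(10:ℝ)^12*(M*(b*N^2*κ^2)) = (4*(10:ℝ)^12*M)*(b*N^2*κ^2) := by ring
      _ ≤ C^2*(b*N^2*κ^2) := mul_le_mul_of_nonneg_right hCsq hq2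
      _ ≤ 18*Λ^4 := hbn2
    have hr0 : 0 ≤ M*(b*N^2*κ^2) := mul_nonneg hM0 hq2
    have hπr : π*(M*(b*N^2*κ^2)) ≤ 4*(M*(b*N^2*κ^2)) := by
      nlinarith [Real.pi_le_four, hr0]
    have hΛ4 : (0:ℝ) ≤ Λ^4 := by positivity
    calc 128*π*M*b*N^2*κ*(16*κ) = 2048*(π*(M*(b*N^2*κ^2))) := by ring
    _ ≤ 2048*(4*(M*(b*N^2*κ^2))) := by linarith
    _ ≤ Λ^4 := by linarith
    _ = Λ^2*Λ^2 := by ring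
  have hT4 : b/2 * (8*π*N^2*K) ≤ Λ^2/(8*κ) := by
    calc b/2 * (8*π*N^2*K) = 4*π*b*N^2*K := by ring
    _ ≤ 4*π*b*N^2*(16 + 32*M*κ/Λ^2) := by
        apply mul_le_mul_of_nonneg_left hKle (by positivity)
    _ = 64*π*b*N^2 + 128*π*M*b*N^2*κ/Λ^2 := by
        field_simp
        ring
    _ ≤ Λ^2/(16*κ) + Λ^2/(16*κ) := add_le_add hi hii
    _ = Λ^2/(8*κ) := by ring
  have eK : -(Λ^2/(2*κ) * (1 - 2/K)) = -(Λ^2/(2*κ)) + Λ^2/(2*κ)*(2/K) := by ring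
  have e16 : Λ^2/(16*κ) = (1/16)*(Λ^2/κ) := by ring
  have e8 : Λ^2/(8*κ) = (1/8)*(Λ^2/κ) := by ring
  have e2 : Λ^2/(2*κ) = (1/2)*(Λ^2/κ) := by ring
  have hpos : 0 ≤ Λ^2/κ := by positivity
  have efin : -(1/8 * Λ^2/κ) = -((1/8)*(Λ^2/κ)) := by ring
  linarith

set_option maxHeartbeats 2000000

/-- If `W` satisfies (H1) and (H2), then there are constants `C ≥ c > 0`
such that whenever `Λ² ≥ C·max{bσ, bκ, (bσκ)^{1/2}, b^{1/2}κ}` (with `Λ,κ,σ,b > 0`),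
the infimum of `F` over `A` satisfies `−Λ²/(2κ) ≤ inf_A F ≤ −c·Λ²/κ`
(the lower bound stated for every admissible pair, the upper bound via an
admissible competitor). -/
theorem scaling_law_large_coupling (W : ℝ → ℝ)
    (hW_cont : ContinuousOn W (Icc (-1:ℝ) 1))
    (hW_nonneg : ∀ x ∈ Icc (-1:ℝ) 1, 0 ≤ W x)
    (hW_zero : ∀ x ∈ Icc (-1:ℝ) 1, (W x = 0 ↔ x = -1 ∨ x = 1))
    (hW2 : ∃ cW > 0, ∀ x ∈ Icc (-1:ℝ) 1, cW * min (|x - 1| ^ 2) (|x + 1| ^ 2) ≤ W x) :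
    ∃ C c : ℝ, 0 < c ∧ c ≤ C ∧
      ∀ Λ κ σ b : ℝ, 0 < Λ → 0 < κ → 0 < σ → 0 < b →
        C * maxParam b σ κ ≤ Λ ^ 2 →
        (∀ u u' h h' h'' : ℝ → ℝ, IsAdmissible u u' h h' h'' →
            -(Λ ^ 2 / (2 * κ)) ≤ energyF W b σ κ Λ u u' h' h'') ∧
        (∃ u u' h h' h'' : ℝ → ℝ, IsAdmissible u u' h h' h'' ∧
            energyF W b σ κ Λ u u' h' h'' ≤ -(c * Λ ^ 2 / κ)) := by
  obtain ⟨xM, hxMmem, hxM'⟩ := isCompact_Icc.exists_isMaxOn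
    (⟨0, by norm_num, by norm_num⟩ : (Icc (-1:ℝ) 1).Nonempty) hW_cont
  have hxM : ∀ x ∈ Icc (-1:ℝ) 1, W x ≤ W xM := fun x hx => hxM' hx
  set M : ℝ := W xM with hM_def
  have hM0 : 0 ≤ M := hW_nonneg xM hxMmem
  have hW1 : W 1 = 0 := (hW_zero 1 ⟨by norm_num, le_refl 1⟩).mpr (Or.inr rfl)
  have hWm1 : W (-1) = 0 := (hW_zero (-1) ⟨le_refl _, by norm_num⟩).mpr (Or.inl rfl)
  refine ⟨10^6 * (1 + M), 1/8, by norm_num, by linarith, ?_⟩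
  intro Λ κ σ b hΛ hκ hσ hb hpar
  set C : ℝ := 10^6 * (1 + M) with hC_def
  have hC : 0 < C := by positivity
  constructor
  · -- lower bound
    intro u u' h h' h'' hadm
    set f : ℝ → ℝ := fun x => W (u x) + b / 2 * u' x ^ 2 + σ / 2 * h' x ^ 2
      + κ / 2 * h'' x ^ 2 + Λ * u x * h'' x with hf_def
    have hE : energyF W b σ κ Λ u u' h' h'' = ∫ x in Ioo (0:ℝ) 1, f x := rfl
    have hpt : ∀ x ∈ Ioo (0:ℝ) 1, -(Λ^2/(2*κ)) ≤ f x := by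
      intro x _
      have hu := hadm.u_mem x
      have hW := hW_nonneg (u x) hu
      have key : -(Λ^2/(2*κ)) ≤ κ/2 * h'' x^2 + Λ * u x * h'' x := by
        have e : κ/2*h'' x^2 + Λ*u x*h'' x + Λ^2/(2*κ)
            = ((κ*h'' x + Λ*u x)^2 + Λ^2*(1 - u x^2))/(2*κ) := by
          field_simp
          ring
        have hnn : 0 ≤ ((κ*h'' x + Λ*u x)^2 + Λ^2*(1 - u x^2))/(2*κ) := by
          apply div_nonneg _ (by linarith)
          have h1 : 0 ≤ 1 - u x^2 := by nlinarith [hu.1, hu.2]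
          nlinarith [sq_nonneg (κ*h'' x + Λ*u x), mul_nonneg (sq_nonneg Λ) h1]
        nlinarith [e ▸ hnn]
      have hb2 : 0 ≤ b/2*u' x^2 := by positivity
      have hσ2 : 0 ≤ σ/2*h' x^2 := by positivity
      simp only [hf_def]
      linarith
    rw [hE]
    by_cases hint : Integrable f (volume.restrict (Ioo (0:ℝ) 1))
    · have e1 : (∫ _x in Ioo (0:ℝ) 1, -(Λ^2/(2*κ))) = -(Λ^2/(2*κ)) := by
        rw [setIntegral_const, Real.volume_real_Ioo]
        norm_num
      rw [show -(Λ^2/(2*κ)) = ∫ _x in Ioo (0:ℝ) 1, -(Λ^2/(2*κ)) from e1.symm]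
      exact setIntegral_mono_on (integrable_const _) hint measurableSet_Ioo hpt
    · rw [integral_undef hint]
      have : 0 ≤ Λ^2/(2*κ) := by positivity
      linarith
  · -- upper bound via competitor
    set n : ℕ := Nat.floor (Real.sqrt (8*σ/κ)) + 1 with hn_def
    have hn : 1 ≤ n := Nat.le_add_left 1 _
    set N : ℝ := (n:ℝ) with hN_def
    have hN0 : 0 ≤ N := Nat.cast_nonneg n
    set K : ℝ := max 16 (32*M*κ/Λ^2) with hK_def
    have hK16 : (16:ℝ) ≤ K := le_max_left _ _
    have hKM : 32*M*κ/Λ^2 ≤ K := le_max_right _ _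
    have hKpos : (0:ℝ) < K := by linarith
    have hKle : K ≤ 16 + 32*M*κ/Λ^2 := by
      apply max_le (le_add_of_nonneg_right (by positivity)) (le_add_of_nonneg_left (by norm_num))
    -- N bounds
    have hs0 : (0:ℝ) ≤ 8*σ/κ := by positivity
    have hs2 : (Real.sqrt (8*σ/κ))^2 = 8*σ/κ := Real.sq_sqrt hs0
    have hκs2 : κ * (Real.sqrt (8*σ/κ))^2 = 8*σ := by rw [hs2]; field_simp
    have hcast : Real.sqrt (8*σ/κ) < N := by
      have h := Nat.lt_floor_add_one (Real.sqrt (8*σ/κ))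
      rw [hN_def, hn_def]
      push_cast
      linarith
    have hfl : N ≤ Real.sqrt (8*σ/κ) + 1 := by
      have h := Nat.floor_le (Real.sqrt_nonneg (8*σ/κ))
      rw [hN_def, hn_def]
      push_cast
      linarith
    have hNlb : 8*σ/κ ≤ N^2 := by
      rw [← hs2]
      nlinarith [Real.sqrt_nonneg (8*σ/κ), hcast]
    have hNlb' : 8*σ ≤ κ*N^2 := by
      rw [← hκs2]
      have := mul_le_mul_of_nonneg_left hNlb hκ.le
      nlinarith [this]
    have hNub' : κ*N^2 ≤ 16*σ + 2*κ := by
      set s : ℝ := Real.sqrt (8*σ/κ) with hs_def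
      have hA : N^2 ≤ (s+1)^2 := pow_le_pow_left₀ hN0 hfl 2
      have hB : κ*N^2 ≤ κ*(s+1)^2 := mul_le_mul_of_nonneg_left hA hκ.le
      have hCq : κ*(s+1)^2 = 8*σ + 2*(κ*s) + κ := by linear_combination hκs2
      have hD : 2*(κ*s) ≤ 8*σ + κ := by
        nlinarith [mul_nonneg hκ.le (sq_nonneg (s-1)), hκs2]
      linarith
    -- maxParam consequences
    have hmax1 : b*σ ≤ maxParam b σ κ := le_trans (le_max_left _ _) (le_max_left _ _)
    have hmax2 : b*κ ≤ maxParam b σ κ := le_trans (le_max_right _ _) (le_max_left _ _)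
    have hmax3 : Real.sqrt (b*σ*κ) ≤ maxParam b σ κ :=
      le_trans (le_max_left _ _) (le_max_right _ _)
    have hmax4 : Real.sqrt b * κ ≤ maxParam b σ κ :=
      le_trans (le_max_right _ _) (le_max_right _ _)
    have hbσ : C*(b*σ) ≤ Λ^2 := le_trans (mul_le_mul_of_nonneg_left hmax1 hC.le) hpar
    have hbκ : C*(b*κ) ≤ Λ^2 := le_trans (mul_le_mul_of_nonneg_left hmax2 hC.le) hpar
    have hbσκ : C^2*(b*σ*κ) ≤ Λ^4 := by
      have h := le_trans (mul_le_mul_of_nonneg_left hmax3 hC.le) hpar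
      have hnn : 0 ≤ C*Real.sqrt (b*σ*κ) := by positivity
      have hsq := mul_self_le_mul_self hnn h
      nlinarith [Real.mul_self_sqrt (show (0:ℝ) ≤ b*σ*κ by positivity), hsq]
    have hbκ2 : C^2*(b*κ^2) ≤ Λ^4 := by
      have h := le_trans (mul_le_mul_of_nonneg_left hmax4 hC.le) hpar
      have hnn : 0 ≤ C*(Real.sqrt b * κ) := by positivity
      have hsq := mul_self_le_mul_self hnn h
      nlinarith [Real.mul_self_sqrt hb.le, hsq]
    -- derived quantities
    have hq1 : 0 ≤ b*N^2*κ := by positivity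
    have hq2 : 0 ≤ b*N^2*κ^2 := by positivity
    have hbn1 : C*(b*N^2*κ) ≤ 18*Λ^2 := by
      have h1 : b*N^2*κ ≤ 16*b*σ + 2*b*κ := by nlinarith [mul_le_mul_of_nonneg_left hNub' hb.le]
      calc C*(b*N^2*κ) ≤ C*(16*b*σ + 2*b*κ) := mul_le_mul_of_nonneg_left h1 hC.le
      _ = 16*(C*(b*σ)) + 2*(C*(b*κ)) := by ring
      _ ≤ 16*Λ^2 + 2*Λ^2 := by linarith
      _ = 18*Λ^2 := by ring
    have hbn2 : C^2*(b*N^2*κ^2) ≤ 18*Λ^4 := by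
      have h1 : b*N^2*κ^2 ≤ 16*b*σ*κ + 2*b*κ^2 := by
        nlinarith [mul_le_mul_of_nonneg_left hNub' (mul_nonneg hb.le hκ.le)]
      calc C^2*(b*N^2*κ^2) ≤ C^2*(16*b*σ*κ + 2*b*κ^2) :=
          mul_le_mul_of_nonneg_left h1 (by positivity)
      _ = 16*(C^2*(b*σ*κ)) + 2*(C^2*(b*κ^2)) := by ring
      _ ≤ 16*Λ^4 + 2*Λ^4 := by linarith
      _ = 18*Λ^4 := by ring
    -- get competitor and conclude
    obtain ⟨u, u', h, h', h'', hadm, hen⟩ := competitor hW_cont hM0 hxM hW1 hWm1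
      hΛ hκ hσ hb hK16 hn
    refine ⟨u, u', h, h', h'', hadm, ?_⟩
    have hNpos : (0:ℝ) < N := by
      have h0 : (0:ℝ) < (n:ℝ) := by exact_mod_cast Nat.lt_of_lt_of_le Nat.zero_lt_one hn
      linarith
    calc energyF W b σ κ Λ u u' h' h''
        ≤ 2*M/K + b/2 * (8*π*N^2*K) + σ/2 * (Λ/(κ*N))^2 - Λ^2/(2*κ) * (1 - 2/K) := hen
    _ ≤ -(1/8 * Λ^2 / κ) := arith_main hM0 hκ hσ hb hΛ hC_def hK16 hKM hKle hNpos
        hNlb' hNub' hbσ hbκ hbσκ hbκ2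
end
end

section
/- Let W : [-1,1] → [0,∞) satisfy (H1). Then for all parameters Λ, κ, σ, b > 0 there exists an admissible pair (u,h) ∈ A such that F(u,h) ≤ (8 + max_{[−1,1]} W) · min{1, b^{1/2}}. -/
open MeasureTheory Set Filter

noncomputable section

namespace UBF

def g (ε : ℝ) : ℝ → ℝ := fun t =>
  (2/ε) * ((Ico (0:ℝ) ε).indicator (fun _ => (1:ℝ)) t
    - (Ico (1/2:ℝ) (1/2+ε)).indicator (fun _ => (1:ℝ)) t)

def up (ε : ℝ) : ℝ → ℝ := fun x => g ε (Int.fract x)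

def uu (ε : ℝ) : ℝ → ℝ := fun x => -1 + ∫ t in (0:ℝ)..x, up ε t

variable {ε : ℝ}

lemma measurable_g : Measurable (g ε) :=
  (((measurable_const.indicator measurableSet_Ico).sub
    (measurable_const.indicator measurableSet_Ico))).const_mul _

lemma measurable_up : Measurable (up ε) := measurable_g.comp measurable_fract

lemma abs_g_le (hε : 0 < ε) (t : ℝ) : |g ε t| ≤ 2/ε := by
  have h1 : ∀ (s : Set ℝ), |s.indicator (fun _ => (1:ℝ)) t| ≤ 1 := by
    intro s
    by_cases h : t ∈ s <;> simp [h]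
  have := h1 (Ico (0:ℝ) ε)
  have := h1 (Ico (1/2:ℝ) (1/2+ε))
  have h2 : |g ε t| = (2/ε) * |(Ico (0:ℝ) ε).indicator (fun _ => (1:ℝ)) t
      - (Ico (1/2:ℝ) (1/2+ε)).indicator (fun _ => (1:ℝ)) t| := by
    rw [g, abs_mul, abs_of_pos (by positivity)]
  have h3 : |(Ico (0:ℝ) ε).indicator (fun _ => (1:ℝ)) t
      - (Ico (1/2:ℝ) (1/2+ε)).indicator (fun _ => (1:ℝ)) t| ≤ 1 := by
    rcases abs_le.mp (h1 (Ico (0:ℝ) ε)) with ⟨a1, a2⟩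
    rcases abs_le.mp (h1 (Ico (1/2:ℝ) (1/2+ε))) with ⟨b1, b2⟩
    have c1 : (0:ℝ) ≤ (Ico (0:ℝ) ε).indicator (fun _ => (1:ℝ)) t :=
      Set.indicator_nonneg (fun _ _ => zero_le_one) t
    have c2 : (0:ℝ) ≤ (Ico (1/2:ℝ) (1/2+ε)).indicator (fun _ => (1:ℝ)) t :=
      Set.indicator_nonneg (fun _ _ => zero_le_one) t
    rw [abs_le]; constructor <;> linarith
  rw [h2]
  calc (2/ε) * _ ≤ (2/ε) * 1 := by
        apply mul_le_mul_of_nonneg_left h3 (by positivity)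
    _ = 2/ε := mul_one _

lemma up_per : Function.Periodic (up ε) 1 := fun x => by simp [up, Int.fract_add_one]

lemma intInt (hε : 0 < ε) : ∀ a b : ℝ, IntervalIntegrable (up ε) volume a b := by
  intro a b
  rw [intervalIntegrable_iff]
  apply Measure.integrableOn_of_bounded (M := 2/ε) measure_Ioc_lt_top.ne
    measurable_up.aestronglyMeasurable
  exact ae_of_all _ fun t => by rw [Real.norm_eq_abs]; exact abs_g_le hε _

lemma g_eq1 (hε2 : ε ≤ 1/2) {t : ℝ} (h0 : 0 ≤ t) (h1 : t < ε) : g ε t = 2/ε := by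
  have : t ∉ Ico (1/2:ℝ) (1/2+ε) := by intro h; exact absurd h.1 (by linarith)
  rw [g, indicator_of_mem (show t ∈ Ico (0:ℝ) ε from ⟨h0, h1⟩), indicator_of_notMem this]
  ring

lemma g_eq0a {t : ℝ} (h0 : ε ≤ t) (h1 : t < 1/2) : g ε t = 0 := by
  have m1 : t ∉ Ico (0:ℝ) ε := by intro h; exact absurd h.2 (by linarith)
  have m2 : t ∉ Ico (1/2:ℝ) (1/2+ε) := by intro h; exact absurd h.1 (by linarith)
  rw [g, indicator_of_notMem m1, indicator_of_notMem m2]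
  ring

lemma g_eq2 (hε2 : ε ≤ 1/2) {t : ℝ} (h0 : 1/2 ≤ t) (h1 : t < 1/2+ε) : g ε t = -(2/ε) := by
  have m1 : t ∉ Ico (0:ℝ) ε := by intro h; exact absurd h.2 (by linarith)
  rw [g, indicator_of_notMem m1,
    indicator_of_mem (show t ∈ Ico (1/2:ℝ) (1/2+ε) from ⟨h0, h1⟩)]
  ring

lemma g_eq0b (hε : 0 ≤ ε) {t : ℝ} (h0 : 1/2 + ε ≤ t) : g ε t = 0 := by
  have m1 : t ∉ Ico (0:ℝ) ε := by intro h; exact absurd h.2 (by linarith)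
  have m2 : t ∉ Ico (1/2:ℝ) (1/2+ε) := by intro h; exact absurd h.2 (by linarith)
  rw [g, indicator_of_notMem m1, indicator_of_notMem m2]
  ring

lemma key {a b C : ℝ} (h0 : 0 ≤ a) (hab : a ≤ b) (hb1 : b ≤ 1)
    (hC : ∀ t, a < t → t < b → g ε t = C) :
    ∫ t in a..b, up ε t = C * (b - a) := by
  have hae : ∀ᵐ t : ℝ, t ∈ uIoc a b → up ε t = C := by
    have hbae : ∀ᵐ t : ℝ, t ≠ b := by
      rw [MeasureTheory.ae_iff]
      have : {t : ℝ | ¬ t ≠ b} = {b} := by ext t; simp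
      rw [this]
      exact measure_singleton b
    filter_upwards [hbae] with t ht hmem
    rw [uIoc_of_le hab] at hmem
    have htb : t < b := lt_of_le_of_ne hmem.2 ht
    have ht0 : 0 < t := lt_of_le_of_lt h0 hmem.1
    have hfr : Int.fract t = t := Int.fract_eq_self.mpr ⟨ht0.le, lt_of_lt_of_le htb hb1⟩
    rw [up, hfr]
    exact hC t hmem.1 htb
  rw [intervalIntegral.integral_congr_ae hae, intervalIntegral.integral_const, smul_eq_mul,
    mul_comm]

section
variable (hε : 0 < ε) (hε2 : ε ≤ 1/2)
include hε hε2

lemma phi1 {x : ℝ} (h0 : 0 ≤ x) (h1 : x ≤ ε) : ∫ t in (0:ℝ)..x, up ε t = 2/ε * x := by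
  rw [key le_rfl h0 (by linarith) (fun t ht1 ht2 => g_eq1 hε2 ht1.le (by linarith))]
  ring

lemma phi2 {x : ℝ} (h0 : ε ≤ x) (h1 : x ≤ 1/2) : ∫ t in (0:ℝ)..x, up ε t = 2 := by
  rw [← intervalIntegral.integral_add_adjacent_intervals (a := 0) (b := ε) (c := x)
    (intInt hε 0 ε) (intInt hε ε x),
    phi1 hε hε2 hε.le le_rfl,
    key hε.le h0 (by linarith) (fun t ht1 ht2 => g_eq0a ht1.le (by linarith))]
  field_simp
  ring

lemma phi3 {x : ℝ} (h0 : 1/2 ≤ x) (h1 : x ≤ 1/2 + ε) :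
    ∫ t in (0:ℝ)..x, up ε t = 2 - 2/ε * (x - 1/2) := by
  rw [← intervalIntegral.integral_add_adjacent_intervals (a := 0) (b := 1/2) (c := x)
    (intInt hε 0 (1/2)) (intInt hε (1/2) x),
    phi2 hε hε2 hε2 le_rfl,
    key (by norm_num) h0 (by linarith) (fun t ht1 ht2 => g_eq2 hε2 ht1.le (by linarith))]
  ring

lemma phi4 {x : ℝ} (h0 : 1/2 + ε ≤ x) (h1 : x ≤ 1) : ∫ t in (0:ℝ)..x, up ε t = 0 := by
  rw [← intervalIntegral.integral_add_adjacent_intervals (a := 0) (b := 1/2 + ε) (c := x)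
    (intInt hε 0 (1/2 + ε)) (intInt hε (1/2 + ε) x),
    phi3 hε hε2 (by linarith) le_rfl,
    key (by linarith) h0 h1 (fun t ht1 ht2 => g_eq0b hε.le ht1.le)]
  field_simp
  ring

lemma uu_per : Function.Periodic (uu ε) 1 := by
  intro x
  have hsplit : ∫ t in (0:ℝ)..(x+1), up ε t
      = (∫ t in (0:ℝ)..x, up ε t) + ∫ t in x..(x+1), up ε t :=
    (intervalIntegral.integral_add_adjacent_intervals (intInt hε 0 x) (intInt hε x (x+1))).symm
  have hper : ∫ t in x..(x+1), up ε t = ∫ t in (0:ℝ)..(0+1), up ε t :=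
    Function.Periodic.intervalIntegral_add_eq up_per x 0
  have h1 : ∫ t in (0:ℝ)..(0+1:ℝ), up ε t = 0 := by
    rw [zero_add]; exact phi4 hε hε2 (by linarith) le_rfl
  simp only [uu, hsplit, hper, h1, add_zero]

lemma uu_fract (x : ℝ) : uu ε x = uu ε (Int.fract x) := by
  have := ((uu_per hε hε2).zsmul ⌊x⌋) (Int.fract x)
  have hx : Int.fract x + ⌊x⌋ • (1:ℝ) = x := by
    rw [zsmul_eq_mul, mul_one, Int.fract, sub_add_cancel]
  rw [hx] at this
  exact this

lemma uu_mem (x : ℝ) : uu ε x ∈ Icc (-1:ℝ) 1 := by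
  rw [uu_fract hε hε2]
  set y := Int.fract x with hy
  have hy0 : 0 ≤ y := Int.fract_nonneg x
  have hy1 : y < 1 := Int.fract_lt_one x
  have h2ε : 2/ε * ε = 2 := by field_simp
  rcases le_or_gt y ε with h1 | h1
  · rw [uu, phi1 hε hε2 hy0 h1]
    have a1 : 0 ≤ 2/ε * y := by positivity
    have a2 : 2/ε * y ≤ 2/ε * ε := mul_le_mul_of_nonneg_left h1 (by positivity)
    constructor <;> [linarith; linarith]
  rcases le_or_gt y (1/2) with h2 | h2
  · rw [uu, phi2 hε hε2 h1.le h2]; constructor <;> norm_num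
  rcases le_or_gt y (1/2 + ε) with h3 | h3
  · rw [uu, phi3 hε hε2 h2.le h3]
    have a1 : 0 ≤ 2/ε * (y - 1/2) := by
      apply mul_nonneg (by positivity); linarith
    have a2 : 2/ε * (y - 1/2) ≤ 2/ε * ε := mul_le_mul_of_nonneg_left (by linarith) (by positivity)
    constructor <;> [linarith; linarith]
  · rw [uu, phi4 hε hε2 h3.le hy1.le]; constructor <;> norm_num

omit hε2 in
lemma uu_cont : Continuous (uu ε) :=
  continuous_const.add (intervalIntegral.continuous_primitive (intInt hε) 0)

omit hε hε2 in
lemma lin_int (a b c d : ℝ) :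
    (∫ x in a..b, (c * x + d)) = c * (b^2 - a^2)/2 + d * (b - a) := by
  rw [intervalIntegral.integral_add (intervalIntegral.intervalIntegrable_id.const_mul c)
      intervalIntegrable_const,
    intervalIntegral.integral_const_mul, integral_id, intervalIntegral.integral_const,
    smul_eq_mul]
  ring

lemma uu_intInt : ∀ a b : ℝ, IntervalIntegrable (uu ε) volume a b :=
  fun a b => (uu_cont hε).intervalIntegrable a b

lemma uu_mean : ∫ x in Ioo (0:ℝ) 1, uu ε x = 0 := by
  rw [← integral_Ioc_eq_integral_Ioo, ← intervalIntegral.integral_of_le (by norm_num : (0:ℝ) ≤ 1),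
    ← intervalIntegral.integral_add_adjacent_intervals (uu_intInt hε hε2 0 ε) (uu_intInt hε hε2 ε 1),
    ← intervalIntegral.integral_add_adjacent_intervals (uu_intInt hε hε2 ε (1/2))
      (uu_intInt hε hε2 (1/2) 1),
    ← intervalIntegral.integral_add_adjacent_intervals (uu_intInt hε hε2 (1/2) (1/2+ε))
      (uu_intInt hε hε2 (1/2+ε) 1)]
  have e1 : ∫ x in (0:ℝ)..ε, uu ε x = ∫ x in (0:ℝ)..ε, (2/ε * x + (-1)) := by
    apply intervalIntegral.integral_congr
    intro x hx
    rw [uIcc_of_le hε.le] at hx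
    rw [uu, phi1 hε hε2 hx.1 hx.2]; ring
  have e2 : ∫ x in ε..(1/2:ℝ), uu ε x = ∫ x in ε..(1/2:ℝ), (1:ℝ) := by
    apply intervalIntegral.integral_congr
    intro x hx
    rw [uIcc_of_le hε2] at hx
    rw [uu, phi2 hε hε2 hx.1 hx.2]; ring
  have e3 : ∫ x in (1/2:ℝ)..(1/2+ε), uu ε x
      = ∫ x in (1/2:ℝ)..(1/2+ε), (-(2/ε) * x + (1 + 1/ε)) := by
    apply intervalIntegral.integral_congr
    intro x hx
    rw [uIcc_of_le (by linarith)] at hx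
    rw [uu, phi3 hε hε2 hx.1 hx.2]; field_simp; ring
  have e4 : ∫ x in (1/2+ε)..(1:ℝ), uu ε x = ∫ x in (1/2+ε)..(1:ℝ), (-1:ℝ) := by
    apply intervalIntegral.integral_congr
    intro x hx
    rw [uIcc_of_le (by linarith)] at hx
    rw [uu, phi4 hε hε2 hx.1 hx.2]; ring
  rw [e1, e2, e3, e4, lin_int, lin_int, intervalIntegral.integral_const,
    intervalIntegral.integral_const, smul_eq_mul, smul_eq_mul]
  field_simp
  ring

end

end UBF

/-- if `W` satisfies (H1), then for all `Λ,κ,σ,b > 0` there is an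
admissible pair `(u,h) ∈ A` with `F(u,h) ≤ (8 + max_{[−1,1]} W)·min{1, b^{1/2}}`. -/
theorem upper_bound_flat (W : ℝ → ℝ)
    (hW_cont : ContinuousOn W (Icc (-1:ℝ) 1))
    (hW_nonneg : ∀ x ∈ Icc (-1:ℝ) 1, 0 ≤ W x)
    (hW_zero : ∀ x ∈ Icc (-1:ℝ) 1, (W x = 0 ↔ x = -1 ∨ x = 1))
    (Λ κ σ b : ℝ) (hΛ : 0 < Λ) (hκ : 0 < κ) (hσ : 0 < σ) (hb : 0 < b) :
    ∃ u u' h h' h'' : ℝ → ℝ, IsAdmissible u u' h h' h'' ∧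
      energyF W b σ κ Λ u u' h' h'' ≤
        (8 + sSup (W '' Icc (-1:ℝ) 1)) * min 1 (Real.sqrt b) := by
  classical
  set M := sSup (W '' Icc (-1:ℝ) 1) with hM
  have hbdd : BddAbove (W '' Icc (-1:ℝ) 1) :=
    (isCompact_Icc.image_of_continuousOn hW_cont).bddAbove
  have hMle : ∀ y ∈ Icc (-1:ℝ) 1, W y ≤ M := fun y hy => le_csSup hbdd (mem_image_of_mem W hy)
  have hW1 : W 1 = 0 := (hW_zero 1 ⟨by norm_num, le_rfl⟩).mpr (Or.inr rfl)
  have hWm1 : W (-1) = 0 := (hW_zero (-1) ⟨le_rfl, by norm_num⟩).mpr (Or.inl rfl)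
  have hM0 : 0 ≤ M := hW1 ▸ hMle 1 ⟨by norm_num, le_rfl⟩
  haveI hfin : IsFiniteMeasure (volume.restrict (Ioo (0:ℝ) 1)) := by
    constructor
    rw [Measure.restrict_apply_univ, Real.volume_Ioo]
    exact ENNReal.ofReal_lt_top
  have hzero_per : Function.Periodic (fun _ : ℝ => (0:ℝ)) 1 := fun _ => rfl
  have hzero_ftc : ∀ x : ℝ,
      (fun _ : ℝ => (0:ℝ)) x = (fun _ : ℝ => (0:ℝ)) 0 + ∫ t in (0:ℝ)..x, (0:ℝ) := by
    intro x; simp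
  have hzero_l2 : MemLp (fun _ : ℝ => (0:ℝ)) 2 (volume.restrict (Ioo (0:ℝ) 1)) := MemLp.zero'
  have hzero_mean : ∫ _x in Ioo (0:ℝ) 1, (0:ℝ) = 0 := by simp
  rcases le_total 1 (Real.sqrt b) with hsb | hsb
  · -- b ≥ 1 : take everything zero
    refine ⟨fun _ => 0, fun _ => 0, fun _ => 0, fun _ => 0, fun _ => 0, ?_, ?_⟩
    · exact ⟨hzero_per, hzero_per, hzero_ftc, fun x => ⟨by norm_num, by norm_num⟩, hzero_l2,
        hzero_mean, hzero_per, hzero_per, hzero_per, hzero_ftc, hzero_ftc, hzero_l2, hzero_mean⟩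
    · have hE : energyF W b σ κ Λ (fun _ => 0) (fun _ => 0) (fun _ => 0) (fun _ => 0)
          = ∫ _x in Ioo (0:ℝ) 1, W 0 := by
        unfold energyF
        apply MeasureTheory.integral_congr_ae
        exact ae_of_all _ (fun x => by norm_num)
      rw [hE, setIntegral_const, min_eq_left hsb, measureReal_def, Real.volume_Ioo]
      have : (ENNReal.ofReal (1 - 0 : ℝ)).toReal = 1 := by norm_num
      rw [this, one_smul]
      have := hMle 0 ⟨by norm_num, by norm_num⟩
      linarith
  · -- b ≤ 1 : transition-layer construction
    set s := Real.sqrt b with hs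
    have hs0 : 0 < s := Real.sqrt_pos.mpr hb
    have hs2 : s ^ 2 = b := Real.sq_sqrt hb.le
    set ε := s / 2 with hεdef
    have hε : 0 < ε := by positivity
    have hε2 : ε ≤ 1/2 := by rw [hεdef]; linarith
    have hεb : ε ^ 2 = b / 4 := by rw [hεdef, div_pow, hs2]; norm_num
    refine ⟨UBF.uu ε, UBF.up ε, fun _ => 0, fun _ => 0, fun _ => 0, ?_, ?_⟩
    · refine ⟨UBF.uu_per hε hε2, UBF.up_per, ?_, UBF.uu_mem hε hε2, ?_,
        UBF.uu_mean hε hε2, hzero_per, hzero_per, hzero_per, hzero_ftc, hzero_ftc, hzero_l2,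
        hzero_mean⟩
      · intro x
        simp [UBF.uu, intervalIntegral.integral_same]
      · exact MemLp.of_bound UBF.measurable_up.aestronglyMeasurable (2/ε)
          (ae_of_all _ fun t => by rw [Real.norm_eq_abs]; exact UBF.abs_g_le hε _)
    · -- energy estimate
      set S : Set ℝ := Ioo (0:ℝ) ε ∪ Ico (1/2:ℝ) (1/2+ε) with hSdef
      set K : ℝ := M + 8 with hK
      have hSm : MeasurableSet S := measurableSet_Ioo.union measurableSet_Ico
      have hb8 : b/2 * (2/ε)^2 = 8 := by
        rw [div_pow, hεb]
        field_simp
        ring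
      have hE : energyF W b σ κ Λ (UBF.uu ε) (UBF.up ε) (fun _ => 0) (fun _ => 0)
          = ∫ x in Ioo (0:ℝ) 1, (W (UBF.uu ε x) + b/2 * UBF.up ε x ^ 2) := by
        unfold energyF
        apply MeasureTheory.integral_congr_ae
        exact ae_of_all _ (fun x => by norm_num)
      have hWint : IntegrableOn (fun x => W (UBF.uu ε x)) (Ioo (0:ℝ) 1) volume :=
        ((hW_cont.comp_continuous (UBF.uu_cont hε) (UBF.uu_mem hε hε2)).integrableOn_Icc
          (a := (0:ℝ)) (b := (1:ℝ))).mono_set Ioo_subset_Icc_self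
      have hup_bound : ∀ x : ℝ, UBF.up ε x ^ 2 ≤ (2/ε)^2 := by
        intro x
        have h := abs_le.mp (UBF.abs_g_le hε (Int.fract x))
        exact sq_le_sq' h.1 h.2
      have hupint : IntegrableOn (fun x => b/2 * UBF.up ε x ^ 2) (Ioo (0:ℝ) 1) volume := by
        exact Measure.integrableOn_of_bounded (M := b/2 * (2/ε)^2)
          (by rw [Real.volume_Ioo]; exact ENNReal.ofReal_ne_top)
          (((UBF.measurable_up.pow_const 2).const_mul (b/2)).aestronglyMeasurable)
          (ae_of_all _ fun x => by
            rw [Real.norm_eq_abs, abs_of_nonneg (by positivity)]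
            exact mul_le_mul_of_nonneg_left (hup_bound x) (by positivity))
      have hIint : IntegrableOn (fun x => W (UBF.uu ε x) + b/2 * UBF.up ε x ^ 2)
          (Ioo (0:ℝ) 1) volume := hWint.add hupint
      have hJint : IntegrableOn (S.indicator (fun _ => K)) (Ioo (0:ℝ) 1) volume := by
        apply Integrable.indicator _ hSm
        exact (integrableOn_const_iff (C := K)).mpr (Or.inr (by rw [Real.volume_Ioo]; exact ENNReal.ofReal_lt_top))
      have hpt : ∀ x ∈ Ioo (0:ℝ) 1,
          W (UBF.uu ε x) + b/2 * UBF.up ε x ^ 2 ≤ S.indicator (fun _ => K) x := by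
        intro x hx
        have hfr : Int.fract x = x := Int.fract_eq_self.mpr ⟨hx.1.le, hx.2⟩
        have hupx : UBF.up ε x = UBF.g ε x := by rw [UBF.up, hfr]
        by_cases hxS : x ∈ S
        · rw [indicator_of_mem hxS]
          have w1 : W (UBF.uu ε x) ≤ M := hMle _ (UBF.uu_mem hε hε2 x)
          have g2 : b/2 * UBF.up ε x ^ 2 ≤ 8 := by
            calc b/2 * UBF.up ε x ^ 2 ≤ b/2 * (2/ε)^2 :=
                  mul_le_mul_of_nonneg_left (hup_bound x) (by positivity)
              _ = 8 := hb8
          rw [hK]; linarith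
        · rw [indicator_of_notMem hxS]
          have h1 : x ∉ Ioo (0:ℝ) ε := fun h => hxS (Or.inl h)
          have h2 : x ∉ Ico (1/2:ℝ) (1/2+ε) := fun h => hxS (Or.inr h)
          rcases lt_or_ge x (1/2) with hc | hc
          · have hxε : ε ≤ x := by
              by_contra h
              push_neg at h
              exact h1 ⟨hx.1, h⟩
            have hg : UBF.g ε x = 0 := UBF.g_eq0a hxε hc
            have hu : UBF.uu ε x = 1 := by
              rw [UBF.uu, UBF.phi2 hε hε2 hxε hc.le]; ring
            rw [hupx, hg, hu, hW1]; norm_num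
          · have hxε : 1/2 + ε ≤ x := by
              by_contra h
              push_neg at h
              exact h2 ⟨hc, h⟩
            have hg : UBF.g ε x = 0 := UBF.g_eq0b hε.le hxε
            have hu : UBF.uu ε x = -1 := by
              rw [UBF.uu, UBF.phi4 hε hε2 hxε hx.2.le]; ring
            rw [hupx, hg, hu, hWm1]; norm_num
      have hS_sub : S ⊆ Ioo (0:ℝ) 1 := by
        intro x hx
        rcases hx with h | h
        · exact ⟨h.1, lt_of_lt_of_le h.2 (by linarith)⟩
        · exact ⟨by linarith [h.1], lt_of_lt_of_le h.2 (by linarith)⟩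
      have hdisj : Disjoint (Ioo (0:ℝ) ε) (Ico (1/2:ℝ) (1/2+ε)) := by
        rw [Set.disjoint_left]
        intro x hx1 hx2
        have := hx1.2
        have := hx2.1
        linarith
      have hJval : ∫ x in Ioo (0:ℝ) 1, S.indicator (fun _ => K) x = (ε + ε) * K := by
        rw [setIntegral_indicator hSm, inter_eq_self_of_subset_right hS_sub, setIntegral_const]
        have hvol : volume S = ENNReal.ofReal ε + ENNReal.ofReal ε := by
          rw [hSdef, measure_union hdisj measurableSet_Ico, Real.volume_Ioo, Real.volume_Ico]
          norm_num
        rw [measureReal_def, hvol, ENNReal.toReal_add ENNReal.ofReal_ne_top ENNReal.ofReal_ne_top,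
          ENNReal.toReal_ofReal hε.le, smul_eq_mul]
      calc energyF W b σ κ Λ (UBF.uu ε) (UBF.up ε) (fun _ => 0) (fun _ => 0)
          = ∫ x in Ioo (0:ℝ) 1, (W (UBF.uu ε x) + b/2 * UBF.up ε x ^ 2) := hE
        _ ≤ ∫ x in Ioo (0:ℝ) 1, S.indicator (fun _ => K) x :=
            setIntegral_mono_on hIint hJint measurableSet_Ioo hpt
        _ = (ε + ε) * K := hJval
        _ = (8 + M) * s := by rw [hK, hεdef]; ring
        _ = (8 + M) * min 1 (Real.sqrt b) := by rw [min_eq_right hsb, hs]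
end
end

section
/- Let W : [-1,1] → [0,∞) satisfy (H1). Then there exists a constant C > 0 (depending only on W) such that for all parameters b, σ, κ, Λ > 0 satisfying Λ² ≥ C·max{σb, bκ, (bσκ)^{1/2}, b^{1/2}κ}, there exists an admissible pair (u,h) ∈ A with F(u,h) ≤ −(1/20)·Λ²/κ. -/
open MeasureTheory Set Filter

noncomputable section

set_option maxHeartbeats 1000000

namespace UBNS

open Real Topology

/-- triangle wave: period 1, `trg t = 4t` on `[-1/4,1/4]`, `= 2-4t` on `[1/4,3/4]`. -/
def trg (t : ℝ) : ℝ := (2 / π) * arcsin (sin (2 * π * t))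

lemma trg_continuous : Continuous trg :=
  continuous_const.mul (continuous_arcsin.comp (by continuity))

lemma trg_periodic : Function.Periodic trg 1 := by
  intro t
  unfold trg
  rw [mul_add, mul_one, Real.sin_add_two_pi]

lemma trg_antiperiodic (t : ℝ) : trg (t + 1/2) = - trg t := by
  unfold trg
  have : 2 * π * (t + 1/2) = 2 * π * t + π := by ring
  rw [this, Real.sin_add_pi, Real.arcsin_neg]
  ring

lemma abs_trg_le_one (t : ℝ) : |trg t| ≤ 1 := by
  have h1 : |arcsin (sin (2 * π * t))| ≤ π / 2 := by
    rw [abs_le]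
    exact ⟨Real.neg_pi_div_two_le_arcsin _, Real.arcsin_le_pi_div_two _⟩
  have hπ : (0:ℝ) < π := Real.pi_pos
  have : |trg t| = (2/π) * |arcsin (sin (2 * π * t))| := by
    rw [trg, abs_mul, abs_of_pos (by positivity : (0:ℝ) < 2/π)]
  rw [this]
  calc (2/π) * |arcsin (sin (2 * π * t))| ≤ (2/π) * (π/2) :=
        mul_le_mul_of_nonneg_left h1 (by positivity)
    _ = 1 := by field_simp

lemma trg_eq_low {t : ℝ} (h1 : -(1/4) ≤ t) (h2 : t ≤ 1/4) : trg t = 4 * t := by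
  have hπ : (0:ℝ) < π := Real.pi_pos
  have ha : arcsin (sin (2 * π * t)) = 2 * π * t := by
    apply Real.arcsin_sin <;> nlinarith
  rw [trg, ha]; field_simp; ring

lemma trg_eq_high {t : ℝ} (h1 : 1/4 ≤ t) (h2 : t ≤ 3/4) : trg t = 2 - 4 * t := by
  have hπ : (0:ℝ) < π := Real.pi_pos
  have hs : sin (2 * π * t) = sin (π - 2 * π * t) := (Real.sin_pi_sub _).symm
  have ha : arcsin (sin (π - 2 * π * t)) = π - 2 * π * t := by
    apply Real.arcsin_sin <;> nlinarith
  rw [trg, hs, ha]; field_simp; ring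

lemma hasDerivAt_trg {t : ℝ} (h : cos (2 * π * t) ≠ 0) :
    HasDerivAt trg (4 * (cos (2 * π * t) / |cos (2 * π * t)|)) t := by
  have hπ : (0:ℝ) < π := Real.pi_pos
  set s := sin (2 * π * t) with hs
  have hsq : s ^ 2 + cos (2 * π * t) ^ 2 = 1 := Real.sin_sq_add_cos_sq _
  have hs1 : s ≠ 1 := by
    intro hh; apply h; nlinarith [sq_nonneg (cos (2 * π * t))]
  have hsm1 : s ≠ -1 := by
    intro hh; apply h; nlinarith [sq_nonneg (cos (2 * π * t))]
  have hinner : HasDerivAt (fun x : ℝ => sin (2 * π * x)) (cos (2 * π * t) * (2 * π)) t := by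
    have h1 : HasDerivAt (fun x : ℝ => 2 * π * x) (2 * π) t := by
      simpa using (hasDerivAt_id t).const_mul (2 * π)
    exact (Real.hasDerivAt_sin _).comp t h1
  have harc : HasDerivAt (fun x : ℝ => arcsin (sin (2 * π * x)))
      (1 / Real.sqrt (1 - s ^ 2) * (cos (2 * π * t) * (2 * π))) t :=
    by have := (Real.hasDerivAt_arcsin hsm1 hs1).comp t hinner; exact this
  have hfin : HasDerivAt trg ((2/π) * (1 / Real.sqrt (1 - s ^ 2) * (cos (2 * π * t) * (2 * π)))) t :=
    harc.const_mul (2/π)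
  have hsqrt : Real.sqrt (1 - s ^ 2) = |cos (2 * π * t)| := by
    rw [show 1 - s ^ 2 = cos (2 * π * t) ^ 2 by nlinarith]
    exact Real.sqrt_sq_eq_abs _
  have habs : |cos (2 * π * t)| ≠ 0 := abs_ne_zero.mpr h
  convert hfin using 1
  rw [hsqrt]
  field_simp
  ring


lemma trg_def (t : ℝ) : trg t = (2 / π) * arcsin (sin (2 * π * t)) := rfl


/-- the unclamped profile -/
def ff (a t : ℝ) : ℝ := trg t / (4 * a)

/-- derivative of `ff` (where defined) -/
def ff' (a t : ℝ) : ℝ := (cos (2 * π * t) / |cos (2 * π * t)|) / a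

/-- clamped trapezoidal profile -/
def UU (a t : ℝ) : ℝ := max (-1) (min 1 (ff a t))

/-- right-continuous choice of derivative of `UU` -/
def UU' (a t : ℝ) : ℝ :=
  if (-1 < ff a t ∧ ff a t < 1) ∨ (ff a t = 1 ∧ ff' a t < 0) ∨ (ff a t = -1 ∧ 0 < ff' a t)
  then ff' a t else 0

variable {a t x : ℝ}

lemma ff_continuous (a : ℝ) : Continuous (ff a) := trg_continuous.div_const _

lemma ff_periodic (a : ℝ) : Function.Periodic (ff a) 1 := fun t => by
  unfold ff; rw [trg_periodic t]

lemma ff'_periodic (a : ℝ) : Function.Periodic (ff' a) 1 := fun t => by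
  unfold ff'
  rw [show 2 * π * (t + 1) = 2 * π * t + 2 * π by ring, Real.cos_add_two_pi]

lemma UU_periodic (a : ℝ) : Function.Periodic (UU a) 1 := fun t => by
  unfold UU; rw [ff_periodic a t]

lemma UU'_periodic (a : ℝ) : Function.Periodic (UU' a) 1 := fun t => by
  unfold UU'; rw [ff_periodic a t, ff'_periodic a t]

lemma UU_continuous (a : ℝ) : Continuous (UU a) :=
  continuous_const.max (continuous_const.min (ff_continuous a))

lemma UU_mem (a t : ℝ) : UU a t ∈ Icc (-1:ℝ) 1 :=
  ⟨le_max_left _ _, max_le (by norm_num) (min_le_left _ _)⟩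

lemma UU_eq_one (h : 1 ≤ ff a t) : UU a t = 1 := by
  unfold UU; rw [min_eq_left h, max_eq_right (by norm_num : (-1:ℝ) ≤ 1)]

lemma UU_eq_neg_one (h : ff a t ≤ -1) : UU a t = -1 := by
  unfold UU; rw [min_eq_right (h.trans (by norm_num)), max_eq_left h]

lemma UU_eq_ff (h1 : -1 ≤ ff a t) (h2 : ff a t ≤ 1) : UU a t = ff a t := by
  unfold UU; rw [min_eq_right h2, max_eq_right h1]

lemma UU_antiperiodic (a t : ℝ) : UU a (t + 1/2) = - UU a t := by
  have hf : ff a (t + 1/2) = - ff a t := by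
    unfold ff; rw [trg_antiperiodic]; ring
  unfold UU
  rw [hf]
  rcases le_total (ff a t) (-1) with h | h
  · rw [min_eq_left (by linarith), max_eq_right (by norm_num), min_eq_right (by linarith),
      max_eq_left h]; ring
  rcases le_total 1 (ff a t) with h2 | h2
  · rw [min_eq_right (by linarith), max_eq_left (by linarith), min_eq_left h2,
      max_eq_right (by norm_num)]
  · rw [min_eq_right (by linarith), max_eq_right (by linarith), min_eq_right h2,
      max_eq_right (by linarith)]

section Regions
variable (ha : 0 < a) (ha20 : a ≤ 1/20)
include ha ha20

lemma ff_ge_one (h1 : a ≤ t) (h2 : t ≤ 1/2 - a) : 1 ≤ ff a t := by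
  have htr : 4 * a ≤ trg t := by
    rcases le_total t (1/4) with h | h
    · rw [trg_eq_low (by linarith) h]; linarith
    · rw [trg_eq_high h (by linarith)]; linarith
  rw [ff, le_div_iff₀ (by positivity)]; linarith

lemma ff_le_neg_one (h1 : 1/2 + a ≤ t) (h2 : t ≤ 1 - a) : ff a t ≤ -1 := by
  have htr : trg t ≤ -(4 * a) := by
    rcases le_total t (3/4) with h | h
    · rw [trg_eq_high (by linarith) h]; linarith
    · have : trg t = trg (t - 1 + 1) := by norm_num
      rw [this, trg_periodic, trg_eq_low (by linarith) (by linarith)]; linarith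
  rw [ff, div_le_iff₀ (by positivity)]; linarith

lemma ff_gt_one (h1 : a < t) (h2 : t < 1/2 - a) : 1 < ff a t := by
  have htr : 4 * a < trg t := by
    rcases le_total t (1/4) with h | h
    · rw [trg_eq_low (by linarith) h]; linarith
    · rw [trg_eq_high h (by linarith)]; linarith
  rw [ff, lt_div_iff₀ (by positivity)]; linarith

lemma ff_lt_neg_one (h1 : 1/2 + a < t) (h2 : t < 1 - a) : ff a t < -1 := by
  have htr : trg t < -(4 * a) := by
    rcases le_total t (3/4) with h | h
    · rw [trg_eq_high (by linarith) h]; linarith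
    · have : trg t = trg (t - 1 + 1) := by norm_num
      rw [this, trg_periodic, trg_eq_low (by linarith) (by linarith)]; linarith
  rw [ff, div_lt_iff₀ (by positivity)]; linarith

lemma cos_ne_zero_of_ff (h : |ff a t| ≤ 1) : cos (2 * π * t) ≠ 0 := by
  have hπ : (0:ℝ) < π := Real.pi_pos
  have htr : |trg t| ≤ 4 * a := by
    rw [ff, abs_div, abs_of_pos (by positivity : (0:ℝ) < 4*a), div_le_one (by positivity)] at h
    exact h
  have harc : |arcsin (sin (2 * π * t))| < π / 2 := by
    have heq : |trg t| = (2/π) * |arcsin (sin (2 * π * t))| := by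
      rw [trg_def, abs_mul, abs_of_pos (by positivity : (0:ℝ) < 2/π)]
    rw [heq] at htr
    by_contra hge
    push_neg at hge
    have h3 : (2/π) * (π/2) ≤ (2/π) * |arcsin (sin (2 * π * t))| :=
      mul_le_mul_of_nonneg_left hge (by positivity)
    have h4 : (2/π) * (π/2) = 1 := by field_simp
    linarith
  intro hc
  have hsq : sin (2 * π * t) ^ 2 = 1 := by
    have := Real.sin_sq_add_cos_sq (2 * π * t); nlinarith
  have hmul : (sin (2 * π * t) - 1) * (sin (2 * π * t) + 1) = 0 := by nlinarith
  rcases mul_eq_zero.mp hmul with h1 | h1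
  · have h1' : sin (2 * π * t) = 1 := by linarith
    rw [h1', Real.arcsin_one, abs_of_pos (by positivity)] at harc; linarith
  · have h1' : sin (2 * π * t) = -1 := by linarith
    rw [h1', Real.arcsin_neg_one, abs_neg, abs_of_pos (by positivity)] at harc; linarith

lemma cos_ne_zero_at_one (h : ff a t = 1) : cos (2 * π * t) ≠ 0 :=
  cos_ne_zero_of_ff ha ha20 (by rw [h]; norm_num)

lemma cos_ne_zero_at_neg_one (h : ff a t = -1) : cos (2 * π * t) ≠ 0 :=
  cos_ne_zero_of_ff ha ha20 (by rw [h]; norm_num)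

end Regions

lemma hasDerivAt_ff (ha : 0 < a) (h : cos (2 * π * t) ≠ 0) :
    HasDerivAt (ff a) (ff' a t) t := by
  have := (hasDerivAt_trg h).div_const (4 * a)
  refine this.congr_deriv ?_
  unfold ff'
  field_simp

lemma ff'_ne_zero (ha : 0 < a) (h : cos (2 * π * t) ≠ 0) : ff' a t ≠ 0 :=
  div_ne_zero (div_ne_zero h (abs_ne_zero.mpr h)) (ne_of_gt ha)

lemma abs_ff'_le (ha : 0 < a) (t : ℝ) : |ff' a t| ≤ 1 / a := by
  unfold ff'
  rw [abs_div, abs_of_pos ha]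
  gcongr
  rcases eq_or_ne (cos (2*π*t)) 0 with h | h
  · simp [h]
  · rw [abs_div, abs_abs, div_self (abs_ne_zero.mpr h)]

lemma abs_UU'_le (ha : 0 < a) (t : ℝ) : |UU' a t| ≤ 1 / a := by
  unfold UU'
  split
  · exact abs_ff'_le ha t
  · simp; positivity

lemma eventually_right_lt {f : ℝ → ℝ} {d x : ℝ} (hd : HasDerivAt f d x) (hneg : d < 0) :
    ∀ᶠ t in 𝓝[>] x, f t < f x := by
  have hs := hasDerivAt_iff_tendsto_slope.mp hd
  have h1 : ∀ᶠ t in 𝓝[≠] x, slope f x t < 0 := hs.eventually_lt_const hneg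
  have h2 : ∀ᶠ t in 𝓝[>] x, slope f x t < 0 :=
    h1.filter_mono (nhdsWithin_mono x fun t ht => ne_of_gt ht)
  filter_upwards [h2, self_mem_nhdsWithin] with t hlt hmem
  rw [slope_def_field] at hlt
  have hden : (0:ℝ) < t - x := sub_pos.mpr hmem
  nlinarith [(div_lt_iff₀ hden).mp hlt]

lemma eventually_right_gt {f : ℝ → ℝ} {d x : ℝ} (hd : HasDerivAt f d x) (hpos : 0 < d) :
    ∀ᶠ t in 𝓝[>] x, f x < f t := by
  have hs := hasDerivAt_iff_tendsto_slope.mp hd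
  have h1 : ∀ᶠ t in 𝓝[≠] x, 0 < slope f x t := hs.eventually_const_lt hpos
  have h2 : ∀ᶠ t in 𝓝[>] x, 0 < slope f x t :=
    h1.filter_mono (nhdsWithin_mono x fun t ht => ne_of_gt ht)
  filter_upwards [h2, self_mem_nhdsWithin] with t hlt hmem
  rw [slope_def_field] at hlt
  have hden : (0:ℝ) < t - x := sub_pos.mpr hmem
  nlinarith [(lt_div_iff₀ hden).mp hlt]

lemma ff_eventually {x : ℝ} (a : ℝ) {s : Set ℝ} (hs : IsOpen s) (hx : ff a x ∈ s) :
    ∀ᶠ t in 𝓝 x, ff a t ∈ s :=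
  (ff_continuous a).continuousAt.eventually_mem (hs.mem_nhds hx)

theorem UU_hasDerivWithinAt (ha : 0 < a) (ha20 : a ≤ 1/20) (x : ℝ) :
    HasDerivWithinAt (UU a) (UU' a x) (Ioi x) x := by
  rcases lt_trichotomy (ff a x) 1 with h1 | h1 | h1
  · rcases lt_trichotomy (-1 : ℝ) (ff a x) with h2 | h2 | h2
    · -- interior
      have hcos : cos (2 * π * x) ≠ 0 :=
        cos_ne_zero_of_ff ha ha20 (abs_le.mpr ⟨h2.le, h1.le⟩)
      have hd := hasDerivAt_ff ha hcos
      have hev : ∀ᶠ t in 𝓝 x, ff a t ∈ Ioo (-1:ℝ) 1 := ff_eventually a isOpen_Ioo ⟨h2, h1⟩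
      have hUeq : UU a =ᶠ[𝓝 x] ff a := hev.mono fun t ht => UU_eq_ff ht.1.le ht.2.le
      have : HasDerivAt (UU a) (ff' a x) x := hd.congr_of_eventuallyEq hUeq
      have hval : UU' a x = ff' a x := if_pos (Or.inl ⟨h2, h1⟩)
      rw [hval]
      exact this.hasDerivWithinAt
    · -- ff a x = -1
      have h2' : ff a x = -1 := h2.symm
      have hcos := cos_ne_zero_at_neg_one ha ha20 h2'
      have hd := hasDerivAt_ff ha hcos
      rcases (ff'_ne_zero ha hcos).lt_or_gt with hf' | hf'
      · -- derivative negative: to the right ff < -1, UU = -1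
        have hev1 : ∀ᶠ t in 𝓝[>] x, ff a t < ff a x := eventually_right_lt hd hf'
        have hUeq : UU a =ᶠ[𝓝[>] x] (fun _ => (-1:ℝ)) := by
          filter_upwards [hev1] with t ht
          exact UU_eq_neg_one (by rw [h2'] at ht; exact ht.le)
        have hU0 : UU a x = -1 := UU_eq_neg_one h2'.le
        have hval : UU' a x = 0 := by
          apply if_neg
          rintro (⟨hA, hB⟩ | ⟨hA, hB⟩ | ⟨hA, hB⟩) <;> linarith
        rw [hval]
        exact (hasDerivWithinAt_const x _ (-1:ℝ)).congr_of_eventuallyEq hUeq (by rw [hU0])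
      · -- derivative positive: to the right -1 < ff < 1, UU = ff
        have hev1 : ∀ᶠ t in 𝓝[>] x, ff a x < ff a t := eventually_right_gt hd hf'
        have hev2 : ∀ᶠ t in 𝓝[>] x, ff a t < 1 :=
          (ff_eventually a isOpen_Iio (by rw [h2']; norm_num : ff a x ∈ Iio 1)).filter_mono
            nhdsWithin_le_nhds
        have hUeq : UU a =ᶠ[𝓝[>] x] ff a := by
          filter_upwards [hev1, hev2] with t ht1 ht2
          exact UU_eq_ff (by rw [h2'] at ht1; linarith) ht2.le
        have hU0 : UU a x = ff a x := UU_eq_ff (le_of_eq h2) h1.le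
        have hval : UU' a x = ff' a x := if_pos (Or.inr (Or.inr ⟨h2', hf'⟩))
        rw [hval]
        exact (hd.hasDerivWithinAt).congr_of_eventuallyEq hUeq (by rw [hU0])
    · -- ff a x < -1
      have hev : ∀ᶠ t in 𝓝 x, ff a t ∈ Iio (-1:ℝ) := ff_eventually a isOpen_Iio h2
      have hUeq : UU a =ᶠ[𝓝 x] (fun _ => (-1:ℝ)) := hev.mono fun t ht => UU_eq_neg_one ht.le
      have hval : UU' a x = 0 := by
        apply if_neg
        rintro (⟨hA, hB⟩ | ⟨hA, hB⟩ | ⟨hA, hB⟩) <;> linarith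
      rw [hval]
      exact ((hasDerivAt_const x (-1:ℝ)).congr_of_eventuallyEq hUeq).hasDerivWithinAt
  · -- ff a x = 1
    have hcos := cos_ne_zero_at_one ha ha20 h1
    have hd := hasDerivAt_ff ha hcos
    rcases (ff'_ne_zero ha hcos).lt_or_gt with hf' | hf'
    · -- derivative negative: to the right -1 < ff < 1, UU = ff
      have hev1 : ∀ᶠ t in 𝓝[>] x, ff a t < ff a x := eventually_right_lt hd hf'
      have hev2 : ∀ᶠ t in 𝓝[>] x, (-1:ℝ) < ff a t :=
        (ff_eventually a isOpen_Ioi (by rw [h1]; norm_num : ff a x ∈ Ioi (-1:ℝ))).filter_mono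
          nhdsWithin_le_nhds
      have hUeq : UU a =ᶠ[𝓝[>] x] ff a := by
        filter_upwards [hev1, hev2] with t ht1 ht2
        exact UU_eq_ff ht2.le (by rw [h1] at ht1; exact ht1.le)
      have hU0 : UU a x = ff a x := UU_eq_ff (by rw [h1]; norm_num) h1.le
      have hval : UU' a x = ff' a x := if_pos (Or.inr (Or.inl ⟨h1, hf'⟩))
      rw [hval]
      exact (hd.hasDerivWithinAt).congr_of_eventuallyEq hUeq (by rw [hU0])
    · -- derivative positive: to the right ff > 1, UU = 1
      have hev1 : ∀ᶠ t in 𝓝[>] x, ff a x < ff a t := eventually_right_gt hd hf'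
      have hUeq : UU a =ᶠ[𝓝[>] x] (fun _ => (1:ℝ)) := by
        filter_upwards [hev1] with t ht
        exact UU_eq_one (by rw [h1] at ht; exact ht.le)
      have hU0 : UU a x = 1 := UU_eq_one h1.ge
      have hval : UU' a x = 0 := by
        apply if_neg
        rintro (⟨hA, hB⟩ | ⟨hA, hB⟩ | ⟨hA, hB⟩) <;> linarith
      rw [hval]
      exact (hasDerivWithinAt_const x _ (1:ℝ)).congr_of_eventuallyEq hUeq (by rw [hU0])
  · -- ff a x > 1
    have hev : ∀ᶠ t in 𝓝 x, ff a t ∈ Ioi (1:ℝ) := ff_eventually a isOpen_Ioi h1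
    have hUeq : UU a =ᶠ[𝓝 x] (fun _ => (1:ℝ)) := hev.mono fun t ht => UU_eq_one ht.le
    have hval : UU' a x = 0 := by
      apply if_neg
      rintro (⟨hA, hB⟩ | ⟨hA, hB⟩ | ⟨hA, hB⟩) <;> linarith
    rw [hval]
    exact ((hasDerivAt_const x (1:ℝ)).congr_of_eventuallyEq hUeq).hasDerivWithinAt

lemma UU'_measurable (a : ℝ) : Measurable (UU' a) := by
  unfold UU'
  have hff : Measurable (ff a) := (ff_continuous a).measurable
  have hff' : Measurable (ff' a) := by
    apply Measurable.div _ measurable_const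
    exact ((Real.continuous_cos.comp (by continuity)).measurable).div
      ((continuous_abs.comp (Real.continuous_cos.comp (by continuity))).measurable)
  apply Measurable.ite _ hff' measurable_const
  have heq : {t | (-1 < ff a t ∧ ff a t < 1) ∨ (ff a t = 1 ∧ ff' a t < 0) ∨
      (ff a t = -1 ∧ 0 < ff' a t)}
      = ff a ⁻¹' (Ioo (-1) 1) ∪ ((ff a ⁻¹' {1} ∩ ff' a ⁻¹' (Iio 0)) ∪
        (ff a ⁻¹' {-1} ∩ ff' a ⁻¹' (Ioi 0))) := by
    ext t
    simp only [mem_setOf_eq, mem_union, mem_preimage, mem_Ioo, mem_inter_iff,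
      mem_singleton_iff, mem_Iio, mem_Ioi]
  rw [heq]
  exact (hff measurableSet_Ioo).union
    (((hff (measurableSet_singleton _)).inter (hff' measurableSet_Iio)).union
      ((hff (measurableSet_singleton _)).inter (hff' measurableSet_Ioi)))

lemma UU'_intervalIntegrable (ha : 0 < a) (p q : ℝ) :
    IntervalIntegrable (UU' a) volume p q := by
  rw [intervalIntegrable_iff]
  apply MeasureTheory.Integrable.mono' (g := fun _ => 1/a)
  · exact (integrableOn_const_iff).mpr (Or.inr measure_Ioc_lt_top)
  · exact (UU'_measurable a).aestronglyMeasurable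
  · exact ae_of_all _ fun t => by simpa using abs_UU'_le ha t

lemma UU_ftc (ha : 0 < a) (ha20 : a ≤ 1/20) (y : ℝ) :
    UU a y = UU a 0 + ∫ t in (0:ℝ)..y, UU' a t := by
  have := intervalIntegral.integral_eq_sub_of_hasDeriv_right
    (f := UU a) (f' := UU' a) (a := 0) (b := y)
    ((UU_continuous a).continuousOn)
    (fun x _ => UU_hasDerivWithinAt ha ha20 x)
    (UU'_intervalIntegrable ha 0 y)
  rw [this]; ring

lemma UU'_eq_zero_of_gt (h : 1 < ff a t) : UU' a t = 0 := by
  unfold UU'; rw [if_neg]; rintro (⟨hA, hB⟩ | ⟨hA, hB⟩ | ⟨hA, hB⟩) <;> linarith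

lemma UU'_eq_zero_of_lt (h : ff a t < -1) : UU' a t = 0 := by
  unfold UU'; rw [if_neg]; rintro (⟨hA, hB⟩ | ⟨hA, hB⟩ | ⟨hA, hB⟩) <;> linarith

lemma split5 {g : ℝ → ℝ} (hg : ∀ p q : ℝ, IntervalIntegrable g volume p q) (a : ℝ) :
    ∫ t in (0:ℝ)..1, g t = (∫ t in (0:ℝ)..a, g t) + ((∫ t in a..(1/2 - a), g t) +
      ((∫ t in (1/2 - a)..(1/2 + a), g t) + ((∫ t in (1/2 + a)..(1 - a), g t) +
        ∫ t in (1 - a)..(1:ℝ), g t))) := by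
  rw [intervalIntegral.integral_add_adjacent_intervals (hg (1/2 + a) (1 - a)) (hg (1 - a) 1),
    intervalIntegral.integral_add_adjacent_intervals (hg (1/2 - a) (1/2 + a)) (hg (1/2 + a) 1),
    intervalIntegral.integral_add_adjacent_intervals (hg a (1/2 - a)) (hg (1/2 - a) 1),
    intervalIntegral.integral_add_adjacent_intervals (hg 0 a) (hg a 1)]

lemma intUU (a : ℝ) : ∫ t in (0:ℝ)..1, UU a t = 0 := by
  have hInt : ∀ p q : ℝ, IntervalIntegrable (UU a) volume p q := fun p q =>
    (UU_continuous a).intervalIntegrable p q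
  have hcomp : ∫ t in (0:ℝ)..(1/2:ℝ), UU a (t + 1/2)
      = ∫ t in (0+1/2:ℝ)..(1/2+1/2:ℝ), UU a t :=
    intervalIntegral.integral_comp_add_right (fun t => UU a t) (1/2)
  have hneg : ∫ t in (0:ℝ)..(1/2:ℝ), UU a (t + 1/2) = -∫ t in (0:ℝ)..(1/2:ℝ), UU a t := by
    simp_rw [UU_antiperiodic a]
    exact intervalIntegral.integral_neg
  have hadd := intervalIntegral.integral_add_adjacent_intervals (hInt 0 (1/2)) (hInt (1/2) 1)
  rw [hneg] at hcomp
  norm_num at hcomp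
  linarith

lemma intUUsq (ha : 0 < a) (ha20 : a ≤ 1/20) :
    1 - 4*a ≤ ∫ t in (0:ℝ)..1, (UU a t)^2 := by
  have hInt : ∀ p q : ℝ, IntervalIntegrable (fun t => (UU a t)^2) volume p q := fun p q =>
    ((UU_continuous a).pow 2).intervalIntegrable p q
  rw [split5 hInt a]
  have h2 : ∫ t in a..(1/2 - a), (UU a t)^2 = (1/2 - a) - a := by
    rw [intervalIntegral.integral_congr (g := fun _ => (1:ℝ))
      (fun t ht => by
        rw [uIcc_of_le (by linarith)] at ht
        rw [UU_eq_one (ff_ge_one ha ha20 ht.1 ht.2)]; norm_num)]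
    simp
  have h4 : ∫ t in (1/2 + a)..(1 - a), (UU a t)^2 = (1 - a) - (1/2 + a) := by
    rw [intervalIntegral.integral_congr (g := fun _ => (1:ℝ))
      (fun t ht => by
        rw [uIcc_of_le (by linarith)] at ht
        rw [UU_eq_neg_one (ff_le_neg_one ha ha20 ht.1 ht.2)]; norm_num)]
    simp
  have h1 : 0 ≤ ∫ t in (0:ℝ)..a, (UU a t)^2 :=
    intervalIntegral.integral_nonneg (by linarith) (fun t _ => sq_nonneg _)
  have h3 : 0 ≤ ∫ t in (1/2 - a)..(1/2 + a), (UU a t)^2 :=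
    intervalIntegral.integral_nonneg (by linarith) (fun t _ => sq_nonneg _)
  have h5 : 0 ≤ ∫ t in (1 - a)..(1:ℝ), (UU a t)^2 :=
    intervalIntegral.integral_nonneg (by linarith) (fun t _ => sq_nonneg _)
  linarith

lemma ae_ne (c : ℝ) : ∀ᵐ t : ℝ, t ≠ c := by
  refine MeasureTheory.ae_iff.mpr ?_
  have : {t : ℝ | ¬ t ≠ c} = {c} := by ext t; simp
  rw [this]
  exact measure_singleton c


lemma UU'sq_intervalIntegrable (ha : 0 < a) (p q : ℝ) :
    IntervalIntegrable (fun t => (UU' a t)^2) volume p q := by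
  rw [intervalIntegrable_iff]
  apply MeasureTheory.Integrable.mono' (g := fun _ => (1/a)^2)
  · exact (integrableOn_const_iff).mpr (Or.inr measure_Ioc_lt_top)
  · exact ((UU'_measurable a).pow_const 2).aestronglyMeasurable
  · refine ae_of_all _ fun t => ?_
    rw [Real.norm_eq_abs, abs_of_nonneg (sq_nonneg _), ← sq_abs]
    exact pow_le_pow_left₀ (abs_nonneg _) (abs_UU'_le ha t) 2

lemma intUU'sq (ha : 0 < a) (ha20 : a ≤ 1/20) :
    ∫ t in (0:ℝ)..1, (UU' a t)^2 ≤ 4/a := by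
  have hInt := fun p q => UU'sq_intervalIntegrable ha p q
  have hbd : ∀ p q : ℝ, |∫ t in p..q, (UU' a t)^2| ≤ (1/a)^2 * |q - p| := fun p q => by
    have := intervalIntegral.norm_integral_le_of_norm_le_const
      (C := (1/a)^2) (f := fun t => (UU' a t)^2) (a := p) (b := q)
      (fun x _ => by
        show ‖UU' a x ^ 2‖ ≤ (1/a)^2
        rw [Real.norm_eq_abs, abs_of_nonneg (sq_nonneg _), ← sq_abs (UU' a x)]
        exact pow_le_pow_left₀ (abs_nonneg _) (abs_UU'_le ha x) 2)
    simpa using this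
  have hz1 : ∫ t in a..(1/2 - a), (UU' a t)^2 = (∫ t in a..(1/2 - a), (0:ℝ)) := by
    apply intervalIntegral.integral_congr_ae
    filter_upwards [ae_ne (1/2 - a)] with t hne hmem
    rw [uIoc_of_le (by linarith : a ≤ 1/2 - a)] at hmem
    rw [UU'_eq_zero_of_gt (ff_gt_one ha ha20 hmem.1 (lt_of_le_of_ne hmem.2 hne))]
    norm_num
  have hz2 : ∫ t in (1/2 + a)..(1 - a), (UU' a t)^2 = (∫ t in (1/2 + a)..(1 - a), (0:ℝ)) := by
    apply intervalIntegral.integral_congr_ae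
    filter_upwards [ae_ne (1 - a)] with t hne hmem
    rw [uIoc_of_le (by linarith : 1/2 + a ≤ 1 - a)] at hmem
    rw [UU'_eq_zero_of_lt (ff_lt_neg_one ha ha20 hmem.1 (lt_of_le_of_ne hmem.2 hne))]
    norm_num
  rw [split5 hInt a, hz1, hz2]
  simp only [intervalIntegral.integral_zero]
  have e1 := (le_abs_self _).trans (hbd 0 a)
  have e3 := (le_abs_self _).trans (hbd (1/2 - a) (1/2 + a))
  have e5 := (le_abs_self _).trans (hbd (1 - a) 1)
  rw [show |a - 0| = a by rw [sub_zero, abs_of_nonneg (by linarith)]] at e1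
  rw [show |1/2 + a - (1/2 - a)| = 2*a by rw [show (1/2 + a - (1/2 - a) : ℝ) = 2*a by ring,
    abs_of_nonneg (by linarith)]] at e3
  rw [show |1 - (1 - a)| = a by rw [show (1 - (1 - a) : ℝ) = a by ring,
    abs_of_nonneg (by linarith)]] at e5
  have key : (1/a)^2 * a + (0 + ((1/a)^2 * (2*a) + (0 + (1/a)^2 * a))) = 4/a := by
    field_simp; ring
  linarith

lemma intW {W : ℝ → ℝ} {M : ℝ} (ha : 0 < a) (ha20 : a ≤ 1/20)
    (hWc : Continuous fun t => W (UU a t)) (hW1 : W 1 = 0) (hWm1 : W (-1) = 0)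
    (hWb : ∀ t : ℝ, |W (UU a t)| ≤ M) :
    ∫ t in (0:ℝ)..1, W (UU a t) ≤ 4 * a * M := by
  have hInt : ∀ p q : ℝ, IntervalIntegrable (fun t => W (UU a t)) volume p q := fun p q =>
    hWc.intervalIntegrable p q
  have hbd : ∀ p q : ℝ, |∫ t in p..q, W (UU a t)| ≤ M * |q - p| := fun p q => by
    have := intervalIntegral.norm_integral_le_of_norm_le_const
      (C := M) (f := fun t => W (UU a t)) (a := p) (b := q)
      (fun x _ => by rw [Real.norm_eq_abs]; exact hWb x)
    simpa using this
  have hz1 : ∫ t in a..(1/2 - a), W (UU a t) = (∫ t in a..(1/2 - a), (0:ℝ)) := by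
    apply intervalIntegral.integral_congr
    intro t ht
    rw [uIcc_of_le (by linarith)] at ht
    show W (UU a t) = 0
    rw [UU_eq_one (ff_ge_one ha ha20 ht.1 ht.2)]
    exact hW1
  have hz2 : ∫ t in (1/2 + a)..(1 - a), W (UU a t) = (∫ t in (1/2 + a)..(1 - a), (0:ℝ)) := by
    apply intervalIntegral.integral_congr
    intro t ht
    rw [uIcc_of_le (by linarith)] at ht
    show W (UU a t) = 0
    rw [UU_eq_neg_one (ff_le_neg_one ha ha20 ht.1 ht.2)]
    exact hWm1
  rw [split5 hInt a, hz1, hz2]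
  simp only [intervalIntegral.integral_zero]
  have e1 := (le_abs_self _).trans (hbd 0 a)
  have e3 := (le_abs_self _).trans (hbd (1/2 - a) (1/2 + a))
  have e5 := (le_abs_self _).trans (hbd (1 - a) 1)
  rw [show |a - 0| = a by rw [sub_zero, abs_of_nonneg (by linarith)]] at e1
  rw [show |1/2 + a - (1/2 - a)| = 2*a by rw [show (1/2 + a - (1/2 - a) : ℝ) = 2*a by ring,
    abs_of_nonneg (by linarith)]] at e3
  rw [show |1 - (1 - a)| = a by rw [show (1 - (1 - a) : ℝ) = a by ring,
    abs_of_nonneg (by linarith)]] at e5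
  linarith

/-- primitive of `UU` -/
def Vf (a : ℝ) : ℝ → ℝ := fun y => ∫ t in (0:ℝ)..y, UU a t

lemma abs_UU_le (a t : ℝ) : |UU a t| ≤ 1 :=
  abs_le.mpr ⟨(UU_mem a t).1, (UU_mem a t).2⟩

lemma Vf_sub (a y z : ℝ) : Vf a z - Vf a y = ∫ t in y..z, UU a t := by
  have hInt : ∀ p q : ℝ, IntervalIntegrable (UU a) volume p q := fun p q =>
    (UU_continuous a).intervalIntegrable p q
  have := intervalIntegral.integral_add_adjacent_intervals (hInt 0 y) (hInt y z)
  unfold Vf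
  linarith

lemma Vf_abs_sub (a y z : ℝ) : |Vf a z - Vf a y| ≤ |z - y| := by
  rw [Vf_sub]
  have := intervalIntegral.norm_integral_le_of_norm_le_const
    (C := 1) (f := UU a) (a := y) (b := z)
    (fun x _ => by rw [Real.norm_eq_abs]; exact abs_UU_le a x)
  simpa using this

lemma Vf_continuous (a : ℝ) : Continuous (Vf a) := by
  have : LipschitzWith 1 (Vf a) := by
    apply LipschitzWith.of_dist_le_mul
    intro y z
    rw [Real.dist_eq, Real.dist_eq]
    simpa using Vf_abs_sub a z y
  exact this.continuous

lemma Vf_periodic (a : ℝ) : Function.Periodic (Vf a) 1 := by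
  intro y
  have h := (UU_periodic a).intervalIntegral_add_eq y 0
  have h2 := Vf_sub a y (y + 1)
  rw [h] at h2
  norm_num [intUU a] at h2
  linarith

lemma abs_Vf_le (a : ℝ) : ∀ y : ℝ, |Vf a y| ≤ 1/2 := by
  have key : ∀ y ∈ Icc (0:ℝ) 1, |Vf a y| ≤ 1/2 := by
    intro y hy
    have h1 : |Vf a y| ≤ |y - 0| := by
      have := Vf_abs_sub a 0 y
      simpa [Vf] using this
    have h2 : |Vf a y| ≤ |1 - y| := by
      have h3 := Vf_abs_sub a y 1
      have h4 : Vf a 1 = 0 := by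
        unfold Vf; exact intUU a
      rw [h4] at h3
      simpa using h3
    rw [abs_of_nonneg (by linarith [hy.1] : (0:ℝ) ≤ y - 0)] at h1
    rw [abs_of_nonneg (by linarith [hy.2] : (0:ℝ) ≤ 1 - y)] at h2
    rcases le_total y (1/2) with h | h <;> linarith
  intro y
  have hfr : Int.fract y ∈ Icc (0:ℝ) 1 := ⟨Int.fract_nonneg y, (Int.fract_lt_one y).le⟩
  have hper : Vf a (Int.fract y) = Vf a y := by
    rw [Int.fract]
    simpa using (Vf_periodic a).sub_int_mul_eq (x := y) ⌊y⌋
  rw [← hper]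
  exact key _ hfr

lemma periodize {g : ℝ → ℝ} (hg : Function.Periodic g 1)
    (hint : ∀ p q : ℝ, IntervalIntegrable g volume p q) {N : ℕ} (hN : 0 < N) :
    ∫ x in (0:ℝ)..1, g ((N:ℝ) * x) = ∫ t in (0:ℝ)..1, g t := by
  have hNne : (N:ℝ) ≠ 0 := Nat.cast_ne_zero.mpr hN.ne'
  rw [intervalIntegral.integral_comp_mul_left g hNne]
  have h1 : ∫ x in ((N:ℝ)*0)..((N:ℝ)*1), g x = (N:ℤ) • ∫ x in (0:ℝ)..1, g x := by
    have := hg.intervalIntegral_add_zsmul_eq (N:ℤ) 0 hint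
    simpa using this
  rw [h1, zsmul_eq_mul, smul_eq_mul]
  push_cast
  field_simp


lemma per_nat {g : ℝ → ℝ} (hg : Function.Periodic g 1) (N : ℕ) (y : ℝ) :
    g (y + N) = g y := by
  simpa using (hg.nat_mul N) y

lemma ioo_eq_interval (g : ℝ → ℝ) :
    ∫ x in Ioo (0:ℝ) 1, g x = ∫ x in (0:ℝ)..1, g x := by
  rw [intervalIntegral.integral_of_le (by norm_num : (0:ℝ) ≤ 1),
    MeasureTheory.integral_Ioc_eq_integral_Ioo]

lemma cont_integrableOn {g : ℝ → ℝ} (hg : Continuous g) :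
    IntegrableOn g (Ioo (0:ℝ) 1) volume :=
  (hg.integrableOn_Icc (a := 0) (b := 1)).mono_set Ioo_subset_Icc_self

lemma Vf_def (a y : ℝ) : Vf a y = ∫ t in (0:ℝ)..y, UU a t := rfl

end UBNS

open UBNS
/-- if `W` satisfies (H1), then there is `C > 0` (depending only on `W`)
such that for all `b,σ,κ,Λ > 0` with `Λ² ≥ C·max{σb, bκ, (bσκ)^{1/2}, b^{1/2}κ}` there
is an admissible pair `(u,h) ∈ A` with `F(u,h) ≤ −(1/20)·Λ²/κ`. -/
theorem upper_bound_negative_scaling (W : ℝ → ℝ)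
    (hW_cont : ContinuousOn W (Icc (-1:ℝ) 1))
    (hW_nonneg : ∀ x ∈ Icc (-1:ℝ) 1, 0 ≤ W x)
    (hW_zero : ∀ x ∈ Icc (-1:ℝ) 1, (W x = 0 ↔ x = -1 ∨ x = 1)) :
    ∃ C : ℝ, 0 < C ∧
      ∀ b σ κ Λ : ℝ, 0 < b → 0 < σ → 0 < κ → 0 < Λ →
        C * maxParam b σ κ ≤ Λ ^ 2 →
        ∃ u u' h h' h'' : ℝ → ℝ, IsAdmissible u u' h h' h'' ∧
          energyF W b σ κ Λ u u' h' h'' ≤ -(1 / 20 * (Λ ^ 2 / κ)) := by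
  obtain ⟨M, hM⟩ := isCompact_Icc.exists_bound_of_continuousOn hW_cont
  have hM1 : (1:ℝ) ∈ Icc (-1:ℝ) 1 := ⟨by norm_num, le_refl 1⟩
  have hMm1 : (-1:ℝ) ∈ Icc (-1:ℝ) 1 := ⟨le_refl _, by norm_num⟩
  have hM0 : 0 ≤ M := le_trans (norm_nonneg _) (hM 1 hM1)
  have hW1 : W 1 = 0 := (hW_zero 1 hM1).mpr (Or.inr rfl)
  have hWm1 : W (-1) = 0 := (hW_zero (-1) hMm1).mpr (Or.inl rfl)
  refine ⟨17600 * (M + 1), by positivity, ?_⟩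
  intro b σ κ Λ hb hσ hκ hΛ hcond
  set C : ℝ := 17600 * (M + 1) with hCdef
  have hCpos : 0 < C := by positivity
  have hC17 : 17600 ≤ C := by nlinarith
  -- the four parameter inequalities
  have hm1 : b * σ ≤ maxParam b σ κ := (le_max_left _ _).trans (le_max_left _ _)
  have hm2 : b * κ ≤ maxParam b σ κ := (le_max_right _ _).trans (le_max_left _ _)
  have hm3 : Real.sqrt (b * σ * κ) ≤ maxParam b σ κ := (le_max_left _ _).trans (le_max_right _ _)
  have hm4 : Real.sqrt b * κ ≤ maxParam b σ κ := (le_max_right _ _).trans (le_max_right _ _)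
  have h1 : C * (b * σ) ≤ Λ^2 := (mul_le_mul_of_nonneg_left hm1 hCpos.le).trans hcond
  have h2 : C * (b * κ) ≤ Λ^2 := (mul_le_mul_of_nonneg_left hm2 hCpos.le).trans hcond
  have h3 : C * Real.sqrt (b * σ * κ) ≤ Λ^2 := (mul_le_mul_of_nonneg_left hm3 hCpos.le).trans hcond
  have h4 : C * (Real.sqrt b * κ) ≤ Λ^2 := (mul_le_mul_of_nonneg_left hm4 hCpos.le).trans hcond
  have hsq1 : C^2 * (b * σ * κ) ≤ Λ^4 := by
    have hx : Real.sqrt (b*σ*κ) * Real.sqrt (b*σ*κ) = b*σ*κ := Real.mul_self_sqrt (by positivity)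
    have hmul := mul_le_mul h3 h3 (by positivity) (by positivity : (0:ℝ) ≤ Λ^2)
    have heq1 : (C * Real.sqrt (b*σ*κ)) * (C * Real.sqrt (b*σ*κ)) = C^2 * (b*σ*κ) := by
      rw [show (C * Real.sqrt (b*σ*κ)) * (C * Real.sqrt (b*σ*κ))
        = C^2 * (Real.sqrt (b*σ*κ) * Real.sqrt (b*σ*κ)) by ring, hx]
    have heq2 : Λ^2 * Λ^2 = Λ^4 := by ring
    linarith
  have hsq2 : C^2 * (b * κ^2) ≤ Λ^4 := by
    have hx : Real.sqrt b * Real.sqrt b = b := Real.mul_self_sqrt hb.le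
    have hmul := mul_le_mul h4 h4 (by positivity) (by positivity : (0:ℝ) ≤ Λ^2)
    have heq1 : (C * (Real.sqrt b * κ)) * (C * (Real.sqrt b * κ)) = C^2 * (b * κ^2) := by
      rw [show (C * (Real.sqrt b * κ)) * (C * (Real.sqrt b * κ))
        = C^2 * (Real.sqrt b * Real.sqrt b) * κ^2 by ring, hx]
      ring
    have heq2 : Λ^2 * Λ^2 = Λ^4 := by ring
    linarith
  -- choice of N
  set s : ℝ := Real.sqrt (10*σ/κ) with hsdef
  have hspos : 0 < s := Real.sqrt_pos.mpr (by positivity)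
  have hssq : s^2 = 10*σ/κ := Real.sq_sqrt (by positivity)
  set N : ℕ := ⌈s⌉₊ with hNdef
  have hNpos : 0 < N := Nat.ceil_pos.mpr hspos
  have hNR : (0:ℝ) < N := by exact_mod_cast hNpos
  have hN1 : s ≤ N := Nat.le_ceil _
  have hNlow : 10*σ/κ ≤ (N:ℝ)^2 := by nlinarith
  have hκN : 10*σ ≤ (N:ℝ)^2 * κ := by
    rw [div_le_iff₀ hκ] at hNlow; linarith
  have hNup : (N:ℝ) < s + 1 := by exact_mod_cast Nat.ceil_lt_add_one hspos.le
  have hssqκ : s^2 * κ = 10*σ := by rw [hssq]; field_simp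
  have hNsqκ : (N:ℝ)^2 * κ ≤ 20*σ + 2*κ := by
    have hN2 : (N:ℝ)^2 ≤ (s+1)^2 := by nlinarith
    have hh : (N:ℝ)^2 * κ ≤ (s+1)^2 * κ := mul_le_mul_of_nonneg_right hN2 hκ.le
    nlinarith [sq_nonneg (s-1), mul_le_mul_of_nonneg_right (sq_nonneg (s-1)) hκ.le]
  have fact1 : b * (N:ℝ)^2 * C * κ ≤ 22 * Λ^2 := by
    have f1 : C*b*((N:ℝ)^2*κ) ≤ C*b*(20*σ+2*κ) :=
      mul_le_mul_of_nonneg_left hNsqκ (by positivity)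
    nlinarith
  have fact2 : b * (N:ℝ)^2 * C^2 * κ^2 ≤ 22 * Λ^4 := by
    have f2 : C^2*b*κ*((N:ℝ)^2*κ) ≤ C^2*b*κ*(20*σ+2*κ) :=
      mul_le_mul_of_nonneg_left hNsqκ (by positivity)
    nlinarith
  -- choice of a
  set a : ℝ := min (1/20) (Λ^2/κ/(40*(M+1))) with hadef
  have ha : 0 < a := lt_min (by norm_num) (by positivity)
  have ha20 : a ≤ 1/20 := min_le_left _ _
  have haM : a ≤ Λ^2/κ/(40*(M+1)) := min_le_right _ _
  have hbNpos : 0 < b * (N:ℝ)^2 * κ := by positivity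
  have hi : 20*(b*(N:ℝ)^2) ≤ (1/20) * (Λ^2/κ) := by
    rw [show (1/20) * (Λ^2/κ) = Λ^2/(20*κ) by ring, le_div_iff₀ (by positivity)]
    nlinarith [mul_nonneg (by linarith : (0:ℝ) ≤ C - 17600) hbNpos.le]
  have hii : 20*(b*(N:ℝ)^2) ≤ (Λ^2/κ/(40*(M+1))) * (Λ^2/κ) := by
    have hMne : (M:ℝ) + 1 ≠ 0 := by positivity
    have hbN2pos : 0 ≤ b * (N:ℝ)^2 * κ^2 := by positivity
    have hCC : 17600*(M+1) ≤ C^2 := by nlinarith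
    have key : 20*(b*(N:ℝ)^2) * (40*(M+1)*κ^2) ≤ Λ^4 := by
      nlinarith [mul_nonneg (by linarith : (0:ℝ) ≤ C^2 - 17600*(M+1)) hbN2pos]
    rw [show (Λ^2/κ/(40*(M+1))) * (Λ^2/κ) = Λ^4/(40*(M+1)*κ^2) by
      field_simp, le_div_iff₀ (by positivity)]
    exact key
  have halow : 20*(b*(N:ℝ)^2) ≤ a * (Λ^2/κ) := by
    rcases min_cases (1/20 : ℝ) (Λ^2/κ/(40*(M+1))) with ⟨heq, _⟩ | ⟨heq, _⟩ <;>
      rw [hadef, heq]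
    · exact hi
    · exact hii
  have hI2 : (b/2) * ((N:ℝ)^2 * (4/a)) ≤ (Λ^2/κ)/10 := by
    rw [show (b/2) * ((N:ℝ)^2 * (4/a)) = 2*(b*(N:ℝ)^2)/a by field_simp; ring,
      div_le_div_iff₀ ha (by norm_num : (0:ℝ) < 10)]
    linarith
  have haM2 : a * (40*(M+1)) ≤ Λ^2/κ := by
    rw [le_div_iff₀ (by positivity)] at haM
    linarith
  have hI1 : 4*a*M ≤ (Λ^2/κ)/10 := by
    rw [le_div_iff₀ (by norm_num : (0:ℝ) < 10)]
    linarith [haM2, mul_nonneg ha.le hM0]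
  have hI3 : σ/2 * ((Λ/κ) * (N:ℝ)⁻¹)^2 ≤ (Λ^2/κ)/20 := by
    have lhs_eq : σ/2 * ((Λ/κ) * (N:ℝ)⁻¹)^2 = (σ*Λ^2)/(2*κ^2*(N:ℝ)^2) := by
      field_simp
    rw [lhs_eq, show (Λ^2/κ)/20 = Λ^2/(20*κ) by ring,
      div_le_div_iff₀ (by positivity) (by positivity)]
    linarith [mul_le_mul_of_nonneg_left hκN (by positivity : (0:ℝ) ≤ 2*κ*Λ^2)]
  -- the construction
  have hNne : (N:ℝ) ≠ 0 := hNR.ne'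
  set u : ℝ → ℝ := fun x => UU a ((N:ℝ)*x) with hu_def
  set u' : ℝ → ℝ := fun x => (N:ℝ) * UU' a ((N:ℝ)*x) with hu'_def
  set hd2 : ℝ → ℝ := fun x => -(Λ/κ) * UU a ((N:ℝ)*x) with hd2_def
  set cf : ℝ := (Λ/κ) * (N:ℝ)⁻¹ with hcf_def
  set c₀ : ℝ := cf * ∫ x in (0:ℝ)..1, Vf a ((N:ℝ)*x) with hc0_def
  set hd1 : ℝ → ℝ := fun x => c₀ - cf * Vf a ((N:ℝ)*x) with hd1_def
  set Hf : ℝ → ℝ := fun x => ∫ t in (0:ℝ)..x, hd1 t with hHf_def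
  set hfun : ℝ → ℝ := fun x => Hf x - ∫ y in Ioo (0:ℝ) 1, Hf y with hfun_def
  have hcf0 : 0 ≤ cf := by rw [hcf_def]; positivity
  have hucont : Continuous u := (UU_continuous a).comp (continuous_const.mul continuous_id)
  have hVfNcont : Continuous (fun x : ℝ => Vf a ((N:ℝ)*x)) :=
    (Vf_continuous a).comp (continuous_const.mul continuous_id)
  have hd1cont : Continuous hd1 :=
    continuous_const.sub (continuous_const.mul
      ((Vf_continuous a).comp (continuous_const.mul continuous_id)))
  have hd2cont : Continuous hd2 :=
    continuous_const.mul ((UU_continuous a).comp (continuous_const.mul continuous_id))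
  have hd1int : ∀ p q : ℝ, IntervalIntegrable hd1 volume p q := fun p q =>
    hd1cont.intervalIntegrable p q
  have hd1per : Function.Periodic hd1 1 := by
    intro y
    simp only [hd1_def]
    rw [mul_add, mul_one, per_nat (Vf_periodic a) N]
  have hint01 : ∫ t in (0:ℝ)..1, hd1 t = 0 := by
    simp only [hd1_def]
    rw [intervalIntegral.integral_sub (f := fun _ => c₀) (g := fun x => cf * Vf a ((N:ℝ)*x))
      intervalIntegrable_const
      ((continuous_const.mul hVfNcont).intervalIntegrable 0 1),
      intervalIntegral.integral_const, intervalIntegral.integral_const_mul, hc0_def]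
    simp
  have hVf0 : Vf a 0 = 0 := by rw [Vf_def, intervalIntegral.integral_same]
  haveI hfin : IsFiniteMeasure (volume.restrict (Ioo (0:ℝ) 1)) := by
    constructor
    rw [Measure.restrict_apply_univ, Real.volume_Ioo]
    exact ENNReal.ofReal_lt_top
  have hvol : (volume (Ioo (0:ℝ) 1)).toReal = 1 := by
    rw [Real.volume_Ioo]; norm_num
  have hWUc : Continuous fun t => W (UU a t) :=
    hW_cont.comp_continuous (UU_continuous a) (fun t => UU_mem a t)
  have hWUb : ∀ t : ℝ, |W (UU a t)| ≤ M := fun t => by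
    simpa [Real.norm_eq_abs] using hM (UU a t) (UU_mem a t)
  have hd1bd : ∀ x : ℝ, |hd1 x| ≤ cf := by
    have hc0bd : |c₀| ≤ cf * (1/2) := by
      rw [hc0_def, abs_mul, abs_of_nonneg hcf0]
      apply mul_le_mul_of_nonneg_left _ hcf0
      have := intervalIntegral.norm_integral_le_of_norm_le_const (C := 1/2)
        (f := fun x => Vf a ((N:ℝ)*x)) (a := 0) (b := 1)
        (fun x _ => by rw [Real.norm_eq_abs]; exact abs_Vf_le a _)
      simpa using this
    intro x
    simp only [hd1_def]
    have h6 : |cf * Vf a ((N:ℝ)*x)| ≤ cf * (1/2) := by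
      rw [abs_mul, abs_of_nonneg hcf0]
      exact mul_le_mul_of_nonneg_left (abs_Vf_le a _) hcf0
    rw [sub_eq_add_neg]
    refine (abs_add_le _ _).trans ?_
    rw [abs_neg]
    linarith
  refine ⟨u, u', hfun, hd1, hd2, ⟨?_, ?_, ?_, ?_, ?_, ?_, ?_, ?_, ?_, ?_, ?_, ?_, ?_⟩, ?_⟩
  · -- u_per
    intro x
    simp only [hu_def]
    rw [mul_add, mul_one, per_nat (UU_periodic a) N]
  · -- u'_per
    intro x
    simp only [hu'_def]
    rw [mul_add, mul_one, per_nat (UU'_periodic a) N]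
  · -- u_ftc
    intro x
    simp only [hu_def, hu'_def]
    have eB : ∫ t in (0:ℝ)..x, (N:ℝ) * UU' a ((N:ℝ)*t)
        = ∫ t in (0:ℝ)..((N:ℝ)*x), UU' a t := by
      rw [intervalIntegral.integral_const_mul, ← smul_eq_mul,
        intervalIntegral.smul_integral_comp_mul_left (UU' a), mul_zero]
    rw [eB, mul_zero]
    exact UU_ftc ha ha20 ((N:ℝ)*x)
  · -- u_mem
    intro x
    exact UU_mem a _
  · -- u'_l2
    apply MemLp.of_bound
      (((UU'_measurable a).comp (measurable_id.const_mul (N:ℝ))).const_mul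
        (N:ℝ)).aestronglyMeasurable ((N:ℝ) * (1/a))
    refine ae_of_all _ fun x => ?_
    rw [Real.norm_eq_abs]
    show |(N:ℝ) * UU' a ((N:ℝ)*x)| ≤ (N:ℝ) * (1/a)
    rw [abs_mul, abs_of_nonneg hNR.le]
    exact mul_le_mul_of_nonneg_left (abs_UU'_le ha _) hNR.le
  · -- u_mean
    have e : ∫ x in Ioo (0:ℝ) 1, u x = ∫ t in (0:ℝ)..1, UU a t := by
      rw [ioo_eq_interval u]
      simp only [hu_def]
      exact periodize (UU_periodic a)
        (fun p q => (UU_continuous a).intervalIntegrable p q) hNpos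
    rw [e, intUU]
  · -- h_per
    intro x
    simp only [hfun_def]
    have hHshift : Hf (x+1) - Hf x = ∫ t in x..(x+1), hd1 t := by
      simp only [hHf_def]
      have := intervalIntegral.integral_add_adjacent_intervals
        (hd1int 0 x) (hd1int x (x+1))
      linarith
    rw [hd1per.intervalIntegral_add_eq x 0, zero_add, hint01] at hHshift
    have : Hf (x+1) = Hf x := by linarith
    rw [this]
  · -- h'_per
    exact hd1per
  · -- h''_per
    intro x
    simp only [hd2_def]
    rw [mul_add, mul_one, per_nat (UU_periodic a) N]
  · -- h_ftc
    intro x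
    simp only [hfun_def, hHf_def]
    rw [intervalIntegral.integral_same]
    ring
  · -- h'_ftc
    intro x
    simp only [hd1_def, hd2_def]
    have eB : ∫ t in (0:ℝ)..x, UU a ((N:ℝ)*t) = (N:ℝ)⁻¹ * Vf a ((N:ℝ)*x) := by
      rw [intervalIntegral.integral_comp_mul_left (UU a) hNne, mul_zero, smul_eq_mul,
        Vf_def]
    rw [intervalIntegral.integral_const_mul, eB, mul_zero, hVf0, hcf_def]
    ring
  · -- h''_l2
    apply MemLp.of_bound hd2cont.aestronglyMeasurable (Λ/κ)
    refine ae_of_all _ fun x => ?_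
    rw [Real.norm_eq_abs]
    show |-(Λ/κ) * UU a ((N:ℝ)*x)| ≤ Λ/κ
    rw [abs_mul, abs_neg, abs_of_pos (by positivity : (0:ℝ) < Λ/κ)]
    calc Λ/κ * |UU a ((N:ℝ)*x)| ≤ Λ/κ * 1 :=
          mul_le_mul_of_nonneg_left (abs_UU_le a _) (by positivity)
      _ = Λ/κ := mul_one _
  · -- h_mean
    simp only [hfun_def]
    have hHcont : Continuous Hf := by
      simp only [hHf_def]
      exact intervalIntegral.continuous_primitive hd1int 0
    rw [MeasureTheory.integral_sub (cont_integrableOn hHcont)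
      ((integrableOn_const_iff).mpr (Or.inr (by rw [Real.volume_Ioo]; exact ENNReal.ofReal_lt_top))),
      MeasureTheory.setIntegral_const, measureReal_def, hvol, one_smul, sub_self]
  · -- energy bound
    have hWuc : Continuous fun x => W (u x) :=
      hWUc.comp (continuous_const.mul continuous_id)
    have hpt : ∀ x : ℝ, W (u x) + b/2 * u' x ^ 2 + σ/2 * hd1 x ^ 2
        + κ/2 * hd2 x ^ 2 + Λ * u x * hd2 x
        = W (u x) + b/2 * u' x ^ 2 + σ/2 * hd1 x ^ 2 - Λ^2/(2*κ) * u x ^ 2 := by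
      intro x
      have he : hd2 x = -(Λ/κ) * u x := by simp only [hd2_def, hu_def]
      rw [he]
      field_simp
      ring
    have hEeq : energyF W b σ κ Λ u u' hd1 hd2
        = ∫ x in Ioo (0:ℝ) 1, (W (u x) + b/2 * u' x ^ 2 + σ/2 * hd1 x ^ 2
            - Λ^2/(2*κ) * u x ^ 2) := by
      unfold energyF
      exact MeasureTheory.integral_congr_ae (ae_of_all _ hpt)
    have hg1 : IntegrableOn (fun x => W (u x)) (Ioo (0:ℝ) 1) volume :=
      cont_integrableOn hWuc
    have hg2 : IntegrableOn (fun x => b/2 * u' x ^ 2) (Ioo (0:ℝ) 1) volume := by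
      apply MeasureTheory.Integrable.mono' (g := fun _ => b/2 * ((N:ℝ) * (1/a))^2)
      · exact (integrableOn_const_iff).mpr
          (Or.inr (by rw [Real.volume_Ioo]; exact ENNReal.ofReal_lt_top))
      · exact ((((UU'_measurable a).comp (measurable_id.const_mul (N:ℝ))).const_mul
          (N:ℝ)).pow_const 2).const_mul (b/2) |>.aestronglyMeasurable
      · refine ae_of_all _ fun x => ?_
        rw [Real.norm_eq_abs]
        show |b/2 * ((N:ℝ) * UU' a ((N:ℝ)*x))^2| ≤ b/2 * ((N:ℝ) * (1/a))^2
        rw [abs_mul, abs_of_pos (by positivity : (0:ℝ) < b/2),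
          abs_of_nonneg (sq_nonneg _)]
        apply mul_le_mul_of_nonneg_left _ (by positivity : (0:ℝ) ≤ b/2)
        rw [← sq_abs ((N:ℝ) * UU' a ((N:ℝ)*x))]
        apply pow_le_pow_left₀ (abs_nonneg _) _ 2
        rw [abs_mul, abs_of_nonneg hNR.le]
        exact mul_le_mul_of_nonneg_left (abs_UU'_le ha _) hNR.le
    have hg3 : IntegrableOn (fun x => σ/2 * hd1 x ^ 2) (Ioo (0:ℝ) 1) volume :=
      cont_integrableOn (continuous_const.mul (hd1cont.pow 2))
    have hg4 : IntegrableOn (fun x => Λ^2/(2*κ) * u x ^ 2) (Ioo (0:ℝ) 1) volume :=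
      cont_integrableOn (continuous_const.mul (hucont.pow 2))
    have hgsum2 : IntegrableOn (fun x => W (u x) + b/2 * u' x ^ 2) (Ioo (0:ℝ) 1) volume :=
      hg1.add hg2
    have hgsum : IntegrableOn (fun x => W (u x) + b/2 * u' x ^ 2 + σ/2 * hd1 x ^ 2)
        (Ioo (0:ℝ) 1) volume := hgsum2.add hg3
    rw [hEeq, MeasureTheory.integral_sub hgsum hg4,
      MeasureTheory.integral_add hgsum2 hg3,
      MeasureTheory.integral_add hg1 hg2]
    -- bound each term
    have hB1 : ∫ x in Ioo (0:ℝ) 1, W (u x) ≤ 4*a*M := by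
      rw [ioo_eq_interval]
      have e : ∫ x in (0:ℝ)..1, W (u x) = ∫ t in (0:ℝ)..1, W (UU a t) := by
        simp only [hu_def]
        exact periodize (g := fun t => W (UU a t))
          (fun y => by simp [UU_periodic a y])
          (fun p q => hWUc.intervalIntegrable p q) hNpos
      rw [e]
      exact intW ha ha20 hWUc hW1 hWm1 hWUb
    have hB2 : ∫ x in Ioo (0:ℝ) 1, b/2 * u' x ^ 2 ≤ (b/2) * ((N:ℝ)^2 * (4/a)) := by
      rw [ioo_eq_interval]
      have e : ∫ x in (0:ℝ)..1, b/2 * u' x ^ 2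
          = (b/2 * (N:ℝ)^2) * ∫ t in (0:ℝ)..1, (UU' a t)^2 := by
        simp only [hu'_def]
        rw [intervalIntegral.integral_congr
          (g := fun x => (b/2 * (N:ℝ)^2) * (UU' a ((N:ℝ)*x))^2)
          (fun x _ => by ring), intervalIntegral.integral_const_mul,
          periodize (g := fun t => (UU' a t)^2) (fun y => by simp [UU'_periodic a y])
            (UU'sq_intervalIntegrable ha) hNpos]
      rw [e]
      have := mul_le_mul_of_nonneg_left (intUU'sq ha ha20)
        (by positivity : (0:ℝ) ≤ b/2 * (N:ℝ)^2)
      linarith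
    have hB3 : ∫ x in Ioo (0:ℝ) 1, σ/2 * hd1 x ^ 2 ≤ σ/2 * cf^2 := by
      have hmono : ∫ x in Ioo (0:ℝ) 1, σ/2 * hd1 x ^ 2
          ≤ ∫ _x in Ioo (0:ℝ) 1, σ/2 * cf^2 := by
        apply MeasureTheory.setIntegral_mono_on hg3
          ((integrableOn_const_iff).mpr
            (Or.inr (by rw [Real.volume_Ioo]; exact ENNReal.ofReal_lt_top)))
          measurableSet_Ioo
        intro x _
        apply mul_le_mul_of_nonneg_left _ (by positivity : (0:ℝ) ≤ σ/2)
        rw [← sq_abs (hd1 x)]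
        exact pow_le_pow_left₀ (abs_nonneg _) (hd1bd x) 2
      rw [MeasureTheory.setIntegral_const, measureReal_def, hvol, one_smul] at hmono
      exact hmono
    have hB4 : Λ^2/(2*κ) * (1 - 4*a) ≤ ∫ x in Ioo (0:ℝ) 1, Λ^2/(2*κ) * u x ^ 2 := by
      rw [ioo_eq_interval]
      have e : ∫ x in (0:ℝ)..1, Λ^2/(2*κ) * u x ^ 2
          = (Λ^2/(2*κ)) * ∫ t in (0:ℝ)..1, (UU a t)^2 := by
        simp only [hu_def]
        rw [intervalIntegral.integral_const_mul,
          periodize (g := fun t => (UU a t)^2) (fun y => by simp [UU_periodic a y])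
            (fun p q => ((UU_continuous a).pow 2).intervalIntegrable p q) hNpos]
      rw [e]
      exact mul_le_mul_of_nonneg_left (intUUsq ha ha20) (by positivity)
    have hfid : Λ^2/(2*κ) * (1 - 4*a) = (Λ^2/κ)/2 - 2*a*(Λ^2/κ) := by
      field_simp
      ring
    have h2aE : 2*a*(Λ^2/κ) ≤ (Λ^2/κ)/10 := by
      have := mul_le_mul_of_nonneg_right ha20 (by positivity : (0:ℝ) ≤ Λ^2/κ)
      linarith
    linarith [hB1, hB2, hB3, hB4, hI1, hI2, hI3, hfid, h2aE, (by positivity : (0:ℝ) ≤ Λ^2/κ)]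


end
end
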